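/- arXiv:1705.06651 — 3 statements merged into one kernel-verified Lean document; each statement's English description precedes it below -/
import Mathlib

section
/- Let σ ∈ Sₙ have cycle type λ₁^{e₁}···λᵣ^{eᵣ} with λ₁ < ··· < λᵣ and λ₁^{e₁} ≠ 1². If the center of Z_{Sₙ}(σ) equals the center of Z_{Sₙ}(τ) for another permutation τ (with appropriate representatives), then σ and τ have the same cycle type. More precisely: the orbit sizes (with multiplicity) of the action of Z(Z_{Sₙ}(σ)) on {1,…,n} recover the multiset of parts of the cycle type of σ, provided the cycle type is not of the form 1²ν. -/
/-- The full cycle type of a permutation of `Fin n`: the multiset of its cycle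
lengths, counting each fixed point as a cycle of length 1. -/
def fullCycleType {n : ℕ} (σ : Equiv.Perm (Fin n)) : Multiset ℕ :=
  σ.cycleType + Multiset.replicate (n - σ.support.card) 1

/-- The center `Z(Z_{Sₙ}(σ))` of the centralizer of `σ`, viewed as a subgroup of `Sₙ`. -/
def centerOfCentralizer {n : ℕ} (σ : Equiv.Perm (Fin n)) : Subgroup (Equiv.Perm (Fin n)) :=
  Subgroup.centralizer {σ} ⊓
    Subgroup.centralizer (Subgroup.centralizer {σ} : Subgroup (Equiv.Perm (Fin n)))

namespace StmtAux

open Equiv Equiv.Perm Finset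

variable {n : ℕ}

lemma sigma_mem (σ : Equiv.Perm (Fin n)) : σ ∈ centerOfCentralizer σ := by
  rw [centerOfCentralizer, Subgroup.mem_inf]
  constructor
  · rw [Subgroup.mem_centralizer_iff]
    rintro g rfl; rfl
  · rw [Subgroup.mem_centralizer_iff]
    intro g hg
    exact (Subgroup.mem_centralizer_iff.mp hg σ rfl).symm

lemma commute_of_mem_center {σ π g : Equiv.Perm (Fin n)}
    (hπ : π ∈ centerOfCentralizer σ) (hg : g ∈ Subgroup.centralizer {σ}) :
    Commute π g := by
  rw [centerOfCentralizer, Subgroup.mem_inf] at hπ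
  exact (Subgroup.mem_centralizer_iff.mp hπ.2 g hg).symm

lemma commute_sigma {σ π : Equiv.Perm (Fin n)} (hπ : π ∈ centerOfCentralizer σ) :
    Commute π σ := by
  rw [centerOfCentralizer, Subgroup.mem_inf] at hπ
  exact (Subgroup.mem_centralizer_iff.mp hπ.1 σ rfl).symm

lemma cycleOf_mem_centralizer (σ : Equiv.Perm (Fin n)) (x : Fin n) :
    σ.cycleOf x ∈ Subgroup.centralizer {σ} := by
  by_cases hx : x ∈ σ.support
  · rw [Subgroup.mem_centralizer_iff]
    rintro g rfl
    exact (Equiv.Perm.self_mem_cycle_factors_commute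
      (Equiv.Perm.cycleOf_mem_cycleFactorsFinset_iff.mpr hx)).symm
  · rw [(Equiv.Perm.cycleOf_eq_one_iff σ).mpr (Equiv.Perm.notMem_support.mp hx)]
    exact one_mem _

lemma swap_mem_centralizer {σ : Equiv.Perm (Fin n)} {a b : Fin n}
    (ha : σ a = a) (hb : σ b = b) :
    Equiv.swap a b ∈ Subgroup.centralizer {σ} := by
  rw [Subgroup.mem_centralizer_iff]
  rintro g rfl
  ext y
  simp only [Equiv.Perm.mul_apply]
  rcases eq_or_ne y a with rfl | hya
  · rw [Equiv.swap_apply_left, hb, ha, Equiv.swap_apply_left]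
  rcases eq_or_ne y b with rfl | hyb
  · rw [Equiv.swap_apply_right, ha, hb, Equiv.swap_apply_right]
  · rw [Equiv.swap_apply_of_ne_of_ne hya hyb,
      Equiv.swap_apply_of_ne_of_ne
        (fun h => hya (g.injective (h.trans ha.symm)))
        (fun h => hyb (g.injective (h.trans hb.symm)))]

lemma fix_of_not_mem_support {σ π : Equiv.Perm (Fin n)}
    (hσ : n - σ.support.card ≠ 2) (hπ : π ∈ centerOfCentralizer σ)
    {x : Fin n} (hx : x ∉ σ.support) : π x = x := by
  have hπσ : Commute π σ := commute_sigma hπ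
  have hπx : π x ∉ σ.support := fun h =>
    hx ((Equiv.Perm.mem_support_iff_of_commute hπσ x).mp h)
  have hxF : x ∈ σ.supportᶜ := Finset.mem_compl.mpr hx
  have hπxF : π x ∈ σ.supportᶜ := Finset.mem_compl.mpr hπx
  have hcard : (σ.supportᶜ).card = n - σ.support.card := by
    rw [Finset.card_compl, Fintype.card_fin]
  rcases le_or_gt (σ.supportᶜ).card 1 with h1 | h1
  · exact Finset.card_le_one.mp h1 _ hπxF _ hxF
  · have h3 : 3 ≤ (σ.supportᶜ).card := by omega
    by_contra hne
    have hns : ¬ σ.supportᶜ ⊆ {x, π x} := by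
      intro hsub
      have := Finset.card_le_card hsub
      have h2 : ({x, π x} : Finset (Fin n)).card ≤ 2 :=
        Finset.card_insert_le x {π x} |>.trans (by simp)
      omega
    obtain ⟨z, hzF, hz⟩ := Finset.not_subset.mp hns
    simp only [Finset.mem_insert, Finset.mem_singleton, not_or] at hz
    have hswap : Equiv.swap x z ∈ Subgroup.centralizer {σ} :=
      swap_mem_centralizer (Equiv.Perm.notMem_support.mp hx)
        (Equiv.Perm.notMem_support.mp (Finset.mem_compl.mp hzF))
    have hc : Commute π (Equiv.swap x z) := commute_of_mem_center hπ hswap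
    have heval : π (Equiv.swap x z x) = Equiv.swap x z (π x) := by
      have := congrArg (fun f : Equiv.Perm (Fin n) => f x) hc.eq
      simpa [Equiv.Perm.mul_apply] using this
    rw [Equiv.swap_apply_left,
      Equiv.swap_apply_of_ne_of_ne hne (fun h => hz.2 h.symm)] at heval
    exact hz.1 (π.injective heval)

lemma orbit_eq_of_mem_support (σ : Equiv.Perm (Fin n)) {x : Fin n}
    (hx : x ∈ σ.support) :
    MulAction.orbit (centerOfCentralizer σ) x = ↑(σ.cycleOf x).support := by
  ext y
  constructor
  · rintro ⟨⟨π, hπ⟩, rfl⟩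
    have hcomm : Commute π (σ.cycleOf x) :=
      commute_of_mem_center hπ (cycleOf_mem_centralizer σ x)
    have hxs : x ∈ (σ.cycleOf x).support :=
      Equiv.Perm.mem_support_cycleOf_iff.mpr ⟨Equiv.Perm.SameCycle.refl _ _, hx⟩
    exact (Equiv.Perm.mem_support_iff_of_commute hcomm x).mpr hxs
  · intro hy
    obtain ⟨k, hk⟩ := (Equiv.Perm.mem_support_cycleOf_iff.mp hy).1
    exact ⟨⟨σ ^ k, Subgroup.zpow_mem _ (sigma_mem σ) k⟩, hk⟩

lemma orbit_eq_singleton {σ : Equiv.Perm (Fin n)}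
    (hσ : n - σ.support.card ≠ 2) {x : Fin n} (hx : x ∉ σ.support) :
    MulAction.orbit (centerOfCentralizer σ) x = {x} := by
  ext y
  constructor
  · rintro ⟨⟨π, hπ⟩, rfl⟩
    exact fix_of_not_mem_support hσ hπ hx
  · intro hy
    rw [Set.mem_singleton_iff] at hy
    rw [hy]
    exact MulAction.mem_orbit_self x

lemma natCard_orbit {σ : Equiv.Perm (Fin n)} (hσ : n - σ.support.card ≠ 2)
    (x : Fin n) :
    Nat.card (MulAction.orbit (centerOfCentralizer σ) x)
      = if x ∈ σ.support then (σ.cycleOf x).support.card else 1 := by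
  split_ifs with h
  · rw [orbit_eq_of_mem_support σ h, Nat.card_coe_set_eq, Set.ncard_coe_finset]
  · rw [orbit_eq_singleton hσ h, Nat.card_coe_set_eq, Set.ncard_singleton]

lemma count_cycleType_eq_card_filter (σ : Equiv.Perm (Fin n)) (k : ℕ) :
    σ.cycleType.count k
      = (σ.cycleFactorsFinset.filter (fun c => c.support.card = k)).card := by
  classical
  rw [Equiv.Perm.cycleType, Multiset.count_map]
  refine congrArg Multiset.card (Multiset.filter_congr ?_)
  intro a _
  simp [Function.comp, eq_comm]

lemma key (σ : Equiv.Perm (Fin n)) (hσ : n - σ.support.card ≠ 2) (k : ℕ) :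
    Nat.card {x : Fin n // Nat.card (MulAction.orbit (centerOfCentralizer σ) x) = k}
      = k * (fullCycleType σ).count k := by
  classical
  have hcount : Nat.card {x : Fin n //
        Nat.card (MulAction.orbit (centerOfCentralizer σ) x) = k}
      = (Finset.univ.filter
          (fun x => (if x ∈ σ.support then (σ.cycleOf x).support.card else 1) = k)).card := by
    simp_rw [natCard_orbit hσ, Nat.card_eq_fintype_card, Fintype.card_subtype]
  rw [hcount]
  have htwo : ∀ x ∈ σ.support, 2 ≤ (σ.cycleOf x).support.card := fun x hx =>
    (Equiv.Perm.isCycle_cycleOf σ (Equiv.Perm.mem_support.mp hx)).two_le_card_support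
  have hcnt : (fullCycleType σ).count k
      = σ.cycleType.count k + (if 1 = k then n - σ.support.card else 0) := by
    rw [fullCycleType, Multiset.count_add, Multiset.count_replicate]
  by_cases hk1 : k = 1
  · subst hk1
    have hct : σ.cycleType.count 1 = 0 :=
      Multiset.count_eq_zero.mpr (fun h => by
        have := Equiv.Perm.two_le_of_mem_cycleType h; omega)
    have hfil : Finset.univ.filter
          (fun x => (if x ∈ σ.support then (σ.cycleOf x).support.card else 1) = 1)
        = σ.supportᶜ := by
      ext x
      simp only [Finset.mem_filter, Finset.mem_univ, true_and, Finset.mem_compl]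
      split_ifs with h
      · constructor
        · intro he; have := htwo x h; omega
        · intro hn; exact absurd h hn
      · simp [h]
    rw [hfil, Finset.card_compl, Fintype.card_fin, hcnt, hct]
    simp
  · have hfil : Finset.univ.filter
          (fun x => (if x ∈ σ.support then (σ.cycleOf x).support.card else 1) = k)
        = (σ.cycleFactorsFinset.filter (fun c => c.support.card = k)).biUnion
            (fun c => c.support) := by
      ext x
      simp only [Finset.mem_filter, Finset.mem_univ, true_and, Finset.mem_biUnion]
      constructor
      · intro hx
        split_ifs at hx with h
        · exact ⟨σ.cycleOf x,
            ⟨Equiv.Perm.cycleOf_mem_cycleFactorsFinset_iff.mpr h, hx⟩,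
            Equiv.Perm.mem_support_cycleOf_iff.mpr ⟨Equiv.Perm.SameCycle.refl _ _, h⟩⟩
        · exact absurd hx.symm hk1
      · rintro ⟨c, hc, hxc⟩
        have hxs : x ∈ σ.support := by
          have h2 := (Equiv.Perm.mem_cycleFactorsFinset_iff.mp hc.1).2 x hxc
          rw [Equiv.Perm.mem_support] at hxc ⊢
          rw [← h2]
          exact hxc
        rw [if_pos hxs, ← Equiv.Perm.cycle_is_cycleOf hxc hc.1]
        exact hc.2
    rw [hfil, Finset.card_biUnion]
    · rw [Finset.sum_congr rfl (fun c hc => (Finset.mem_filter.mp hc).2),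
        Finset.sum_const, smul_eq_mul, hcnt, if_neg (fun h => hk1 h.symm),
        count_cycleType_eq_card_filter]
      ring
    · intro a ha b hb hab
      exact Equiv.Perm.Disjoint.disjoint_support
        (Equiv.Perm.cycleFactorsFinset_pairwise_disjoint σ
          (Finset.mem_coe.mpr (Finset.mem_filter.mp ha).1)
          (Finset.mem_coe.mpr (Finset.mem_filter.mp hb).1) hab)

end StmtAux

/-- Provided the cycle type of `σ` is not of the form `1²ν` (i.e. `σ` does not have
exactly two fixed points), the orbit sizes (with multiplicity) of the action of
`Z(Z_{Sₙ}(σ))` on `{1,…,n}` recover the multiset of parts of the cycle type of `σ`: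
for each `k`, the number of points lying in an orbit of size `k` is `k` times the
multiplicity of the part `k`.  Consequently, if `τ` is another permutation not having
exactly two fixed points and `Z(Z_{Sₙ}(σ)) = Z(Z_{Sₙ}(τ))`, then `σ` and `τ` have the
same cycle type. -/
theorem stmt_16 (n : ℕ) (σ : Equiv.Perm (Fin n)) (hσ : n - σ.support.card ≠ 2) :
    (∀ k : ℕ,
      Nat.card {x : Fin n // Nat.card (MulAction.orbit (centerOfCentralizer σ) x) = k}
        = k * (fullCycleType σ).count k) ∧
    (∀ τ : Equiv.Perm (Fin n), n - τ.support.card ≠ 2 →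
      centerOfCentralizer σ = centerOfCentralizer τ →
      fullCycleType σ = fullCycleType τ) := by
  refine ⟨StmtAux.key σ hσ, ?_⟩
  intro τ hτ hZ
  ext k
  rcases Nat.eq_zero_or_pos k with rfl | hk
  · have h0 : ∀ ρ : Equiv.Perm (Fin n), (fullCycleType ρ).count 0 = 0 := by
      intro ρ
      rw [fullCycleType, Multiset.count_add, Multiset.count_replicate]
      rw [Multiset.count_eq_zero.mpr (fun h => by
        have := Equiv.Perm.two_le_of_mem_cycleType h; omega)]
      simp
    rw [h0, h0]
  · have h1 := StmtAux.key σ hσ k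
    have h2 := StmtAux.key τ hτ k
    rw [hZ] at h1
    exact Nat.eq_of_mul_eq_mul_left hk (h1.symm.trans h2)
end

section
/- Let σ ∈ Aₙ have cycle type λ = λ₁¹···λᵣ¹ with all parts distinct and odd, and suppose every λᵢ is a perfect square. Then the two Aₙ-conjugacy classes into which the Sₙ-class of σ splits are not z-conjugate: if x, y represent the two classes, then Z_{Aₙ}(x) and Z_{Aₙ}(y) are not conjugate subgroups in Aₙ. -/
open Equiv Equiv.Perm

/-- The centralizer of `z` in the alternating group, viewed as a subgroup of `Sₙ`. -/
def altCentralizer {n : ℕ} (z : Equiv.Perm (Fin n)) : Subgroup (Equiv.Perm (Fin n)) :=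
  Subgroup.centralizer {z} ⊓ alternatingGroup (Fin n)

lemma addRight_one_pow {m : ℕ} (j : ℕ) :
    (Equiv.addRight (1 : ZMod m)) ^ j = Equiv.addRight (j : ZMod m) := by
  induction j with
  | zero => ext x; simp
  | succ j ih =>
    rw [pow_succ, ih]
    ext x
    simp [mul_apply]
    ring

lemma sign_addRight_zmod {m : ℕ} [NeZero m] (hm : Odd m) (t : ZMod m) :
    sign (Equiv.addRight t) = 1 := by
  rcases eq_or_lt_of_le (Nat.one_le_iff_ne_zero.mpr (NeZero.ne m)) with h1 | h1
  · have : Subsingleton (ZMod m) :=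
      Fintype.card_le_one_iff_subsingleton.mp (by rw [ZMod.card]; omega)
    have : Equiv.addRight t = 1 := Equiv.ext fun x => Subsingleton.elim _ _
    rw [this, map_one]
  · have hf : Fact (1 < m) := ⟨h1⟩
    have hcyc : (Equiv.addRight (1 : ZMod m)).IsCycle := by
      refine ⟨0, ?_, fun y _ => ?_⟩
      · have : Nontrivial (ZMod m) := ZMod.nontrivial m
        simp only [coe_addRight, zero_add]
        exact one_ne_zero
      · refine ⟨(y.val : ℤ), ?_⟩
        rw [zpow_natCast, addRight_one_pow]
        simp [ZMod.natCast_val, ZMod.cast_id]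
    have hsupp : (Equiv.addRight (1 : ZMod m)).support = Finset.univ := by
      ext x
      simp only [Finset.mem_univ, iff_true, mem_support, coe_addRight]
      have : Nontrivial (ZMod m) := ZMod.nontrivial m
      intro h
      exact one_ne_zero (add_eq_left.mp h)
    have hs1 : sign (Equiv.addRight (1 : ZMod m)) = 1 := by
      rw [hcyc.sign, hsupp]
      simp only [Finset.card_univ, ZMod.card]
      rw [hm.neg_one_pow, neg_neg]
    have ht : t = ((t.val : ℕ) : ZMod m) := by simp [ZMod.natCast_val, ZMod.cast_id]
    rw [ht, ← addRight_one_pow, map_pow, hs1, one_pow]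

lemma sign_mul_unit_square {N m : ℕ} [NeZero N] (hm : Odd m) (hN : N = m * m)
    (u : (ZMod N)ˣ) :
    sign (MulAction.toPerm u : Perm (ZMod N)) = 1 := by
  have hm0 : m ≠ 0 := by rintro rfl; simp at hm
  haveI : NeZero m := ⟨hm0⟩
  have hmpos : 0 < m := Nat.pos_of_ne_zero hm0
  set a : ℕ := (↑u : ZMod N).val with ha
  have hcop : a.Coprime N := ZMod.val_coe_unit_coprime u
  have hcopm : a.Coprime m := Nat.Coprime.coprime_dvd_right ⟨m, hN⟩ hcop
  set v : (ZMod m)ˣ := ZMod.unitOfCoprime a hcopm with hv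
  -- the equiv between ZMod m × ZMod m and ZMod N
  have hval_lt : ∀ p : ZMod m × ZMod m, p.1.val + m * p.2.val < N := by
    intro p
    have h1 := ZMod.val_lt p.1
    have h2 := ZMod.val_lt p.2
    calc p.1.val + m * p.2.val < m * (p.2.val + 1) := by rw [Nat.mul_succ]; omega
    _ ≤ m * m := Nat.mul_le_mul_left m (by omega)
    _ = N := hN.symm
  set Φ : ZMod m × ZMod m ≃ ZMod N :=
    { toFun := fun p => ((p.1.val + m * p.2.val : ℕ) : ZMod N)
      invFun := fun x => (((x.val : ℕ) : ZMod m), ((x.val / m : ℕ) : ZMod m))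
      left_inv := by
        intro p
        have hlt := hval_lt p
        have hval : ((p.1.val + m * p.2.val : ℕ) : ZMod N).val = p.1.val + m * p.2.val := by
          rw [ZMod.val_natCast, Nat.mod_eq_of_lt hlt]
        ext
        · simp only [hval]
          push_cast
          simp [ZMod.natCast_val, ZMod.cast_id]
        · simp only [hval]
          rw [Nat.add_mul_div_left _ _ hmpos, Nat.div_eq_of_lt (ZMod.val_lt p.1)]
          simp [ZMod.natCast_val, ZMod.cast_id]
      right_inv := by
        intro x
        have h1 : ((x.val : ℕ) : ZMod m).val = x.val % m := ZMod.val_natCast _ _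
        have h2 : ((x.val / m : ℕ) : ZMod m).val = x.val / m := by
          rw [ZMod.val_natCast, Nat.mod_eq_of_lt]
          have := ZMod.val_lt x
          exact Nat.div_lt_of_lt_mul (lt_of_lt_of_eq this hN)
        simp only [h1, h2, Nat.mod_add_div]
        simp [ZMod.natCast_val, ZMod.cast_id] }
    with hPhi
  set T : ZMod m → ZMod m := fun r => ((a * r.val / m : ℕ) : ZMod m) with hT
  set F : Perm (ZMod m × ZMod m) :=
    Equiv.prodCongrRight (fun r => (MulAction.toPerm v).trans (Equiv.addRight (T r))) with hF
  set B : Perm (ZMod m × ZMod m) :=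
    Equiv.prodCongrLeft (fun _ => MulAction.toPerm v) with hB
  have hvA : ((v : ZMod m)) = ((a : ℕ) : ZMod m) := ZMod.coe_unitOfCoprime a hcopm
  have hPhiVal : ∀ p : ZMod m × ZMod m, (Φ p).val = p.1.val + m * p.2.val := by
    intro p
    show ((p.1.val + m * p.2.val : ℕ) : ZMod N).val = _
    rw [ZMod.val_natCast, Nat.mod_eq_of_lt (hval_lt p)]
  have hmdvd : m ∣ N := ⟨m, hN⟩
  have hcastmod : ∀ k : ℕ, ((k % N : ℕ) : ZMod m) = ((k : ℕ) : ZMod m) := by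
    intro k
    exact (ZMod.natCast_eq_natCast_iff _ _ _).mpr ((Nat.mod_modEq k N).of_dvd hmdvd)
  have hdivmod : ∀ k : ℕ, (((k % N) / m : ℕ) : ZMod m) = ((k / m : ℕ) : ZMod m) := by
    intro k
    have h5 : k % N + N * (k / N) = k := Nat.mod_add_div k N
    have h7 : k = k % N + m * (m * (k / N)) := by
      rw [← mul_assoc, ← hN]
      exact h5.symm
    have h6 : (k % N + m * (m * (k / N))) / m = (k % N) / m + m * (k / N) :=
      Nat.add_mul_div_left _ _ hmpos
    have h8 : k / m = k % N / m + m * (k / N) := by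
      conv_lhs => rw [h7]
      rw [h6]
    rw [h8]
    push_cast
    simp
  -- key conjugation identity
  have hkey : (Φ.trans (MulAction.toPerm u)).trans Φ.symm = F.trans B := by
    ext p
    · -- first components
      show ((((MulAction.toPerm u) (Φ p)) : ZMod N).val : ZMod m) = ((F.trans B) p).1
      have h1 : (MulAction.toPerm u) (Φ p) = (↑u : ZMod N) * (Φ p) := rfl
      have h2 : ((F.trans B) p).1 = (↑v : ZMod m) * p.1 := rfl
      rw [h1, h2, ZMod.val_mul, ← ha, hcastmod, hPhiVal, hvA]
      push_cast
      simp [ZMod.natCast_val, ZMod.cast_id]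
    · -- second components
      show ((((MulAction.toPerm u) (Φ p) : ZMod N).val / m : ℕ) : ZMod m) = ((F.trans B) p).2
      have h1 : (MulAction.toPerm u) (Φ p) = (↑u : ZMod N) * (Φ p) := rfl
      have h2 : ((F.trans B) p).2 = (↑v : ZMod m) * p.2 + T p.1 := rfl
      rw [h1, h2, ZMod.val_mul, ← ha, hdivmod, hPhiVal]
      have h3 : a * (p.1.val + m * p.2.val) = a * p.1.val + m * (a * p.2.val) := by ring
      rw [h3, Nat.add_mul_div_left _ _ hmpos]
      push_cast
      rw [hvA, hT]
      push_cast
      rw [show ((p.2.val : ℕ) : ZMod m) = p.2 by simp [ZMod.natCast_val, ZMod.cast_id]]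
      ring
  -- compute signs
  have hsign1 : sign (MulAction.toPerm u : Perm (ZMod N)) = sign (F.trans B) := by
    have h := sign_symm_trans_trans (MulAction.toPerm u : Perm (ZMod N)) Φ.symm
    rw [Equiv.symm_symm, hkey] at h
    exact h.symm
  set s : ℤˣ := sign (MulAction.toPerm v : Perm (ZMod m)) with hs
  have hsB : sign B = s ^ m := by
    rw [hB, sign_prodCongrLeft]
    simp [ZMod.card, hs]
  have hsF : sign F = s ^ m := by
    rw [hF, sign_prodCongrRight]
    have : ∀ r : ZMod m, sign ((MulAction.toPerm v).trans (Equiv.addRight (T r))) = s := by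
      intro r
      have : (MulAction.toPerm v).trans (Equiv.addRight (T r))
          = (Equiv.addRight (T r)) * (MulAction.toPerm v) := rfl
      rw [this, map_mul, sign_addRight_zmod hm, one_mul]
    rw [Finset.prod_congr rfl (fun r _ => this r)]
    simp [ZMod.card]
  have : sign (F.trans B) = s ^ m * s ^ m := by
    have hmul : F.trans B = B * F := rfl
    rw [hmul, map_mul, hsB, hsF]
  have hfin : sign (MulAction.toPerm u : Perm (ZMod N)) = 1 := by
    rw [hsign1, this, ← pow_add]
    have h2m : m + m = 2 * m := by ring
    rw [h2m, pow_mul, Int.units_sq, one_pow]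
  exact hfin

section Blocks

variable {α : Type*} [DecidableEq α] [Fintype α]

open Finset in
lemma blocks_eval {ι : Type*} [DecidableEq ι] (k : ι → Perm α) (B : ι → Finset α)
    (S : Finset ι) :
    ∀ (_hsupp : ∀ i ∈ S, (k i).support ⊆ B i)
      (_hdisj : (S : Set ι).Pairwise fun i j => Disjoint (B i) (B j))
      (hcomm : (S : Set ι).Pairwise (Function.onFun Commute k)) (x : α),
      ((∀ i ∈ S, x ∉ B i) → S.noncommProd k hcomm x = x) ∧
      (∀ c ∈ S, x ∈ B c → S.noncommProd k hcomm x = k c x) := by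
  induction S using Finset.induction_on with
  | empty => intro _ _ hcomm x; simp
  | @insert a S ha ih =>
    intro hsupp hdisj hcomm x
    have hsupp' : ∀ i ∈ S, (k i).support ⊆ B i := fun i hi => hsupp i (mem_insert_of_mem hi)
    have hdisj' : (S : Set ι).Pairwise fun i j => Disjoint (B i) (B j) :=
      hdisj.mono (by simp only [coe_insert]; exact Set.subset_insert _ _)
    have hcomm' : (S : Set ι).Pairwise (Function.onFun Commute k) :=
      hcomm.mono (by simp only [coe_insert]; exact Set.subset_insert _ _)
    have hrw : (insert a S).noncommProd k hcomm = k a * S.noncommProd k hcomm' :=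
      Finset.noncommProd_insert_of_notMem S a k hcomm ha
    constructor
    · intro hx
      rw [hrw, Equiv.Perm.mul_apply, (ih hsupp' hdisj' hcomm' x).1
        (fun i hi => hx i (mem_insert_of_mem hi))]
      have : x ∉ (k a).support := fun h => hx a (mem_insert_self a S) (hsupp a (mem_insert_self a S) h)
      exact Equiv.Perm.notMem_support.mp this
    · intro c hc hxc
      rcases Finset.mem_insert.mp hc with rfl | hcS
      · rw [hrw, Equiv.Perm.mul_apply, (ih hsupp' hdisj' hcomm' x).1]
        intro i hi
        have hne : c ≠ i := fun h => ha (h ▸ hi)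
        have := hdisj (mem_insert_self c S) (mem_insert_of_mem hi) hne
        exact fun hxi => (Finset.disjoint_left.mp this) hxc hxi
      · rw [hrw, Equiv.Perm.mul_apply, (ih hsupp' hdisj' hcomm' x).2 c hcS hxc]
        have hkx : k c x ∈ B c := by
          by_cases h : x ∈ (k c).support
          · exact hsupp' c hcS (Equiv.Perm.apply_mem_support.mpr h)
          · rw [Equiv.Perm.notMem_support.mp h]; exact hxc
        have hne : a ≠ c := fun h => ha (h ▸ hcS)
        have hd := hdisj (mem_insert_self a S) (mem_insert_of_mem hcS) hne
        have : k c x ∉ (k a).support := fun h =>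
          (Finset.disjoint_left.mp hd) (hsupp a (mem_insert_self a S) h) hkx
        exact Equiv.Perm.notMem_support.mp this

end Blocks

section Structure

open Equiv Equiv.Perm Finset

variable {n : ℕ}

lemma cycleType_nodup_of_full {z : Perm (Fin n)} (h : (fullCycleType z).Nodup) :
    z.cycleType.Nodup := (Multiset.nodup_add.mp h).1

lemma fixed_card_le_one {z : Perm (Fin n)} (h : (fullCycleType z).Nodup) :
    n - z.support.card ≤ 1 := by
  by_contra hlt
  push_neg at hlt
  have h2 := (Multiset.nodup_add.mp h).2.1
  have := Multiset.nodup_iff_count_le_one.mp h2 1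
  rw [Multiset.count_replicate_self] at this
  omega

/-- every permutation commuting with `z` fixes each point outside the support of `z`,
when `z` has at most one fixed point. -/
lemma fix_of_commute {z τ : Perm (Fin n)} (hc : Commute τ z)
    (h1 : n - z.support.card ≤ 1) : ∀ w, w ∉ z.support → τ w = w := by
  intro w hw
  have hzc : τ * z * τ⁻¹ = z := by
    rw [hc.eq]; group
  have hmap : z.support = z.support.map τ.toEmbedding := by
    conv_lhs => rw [← hzc]
    exact support_conj
  have hτw : τ w ∉ z.support := by
    intro hmem
    rw [hmap] at hmem
    obtain ⟨v, hv, hveq⟩ := Finset.mem_map.mp hmem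
    have : v = w := τ.injective hveq
    exact hw (this ▸ hv)
  have hcompl : (z.supportᶜ : Finset (Fin n)).card ≤ 1 := by
    rw [Finset.card_compl]
    simpa using h1
  have hw' : w ∈ z.supportᶜ := Finset.mem_compl.mpr hw
  have hτw' : τ w ∈ z.supportᶜ := Finset.mem_compl.mpr hτw
  exact Finset.card_le_one.mp hcompl _ hτw' _ hw'

/-- a permutation commuting with `z` preserves each cycle of `z`, when the cycle
lengths of `z` are pairwise distinct. -/
lemma cycle_fixed_of_commute {z τ : Perm (Fin n)} (hc : Commute τ z)
    (hnd : z.cycleType.Nodup) :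
    ∀ c ∈ z.cycleFactorsFinset, τ * c * τ⁻¹ = c := by
  intro c hcf
  have hzc : τ * z * τ⁻¹ = z := by rw [hc.eq]; group
  have hmem : τ * c * τ⁻¹ ∈ z.cycleFactorsFinset := by
    have := (mem_cycleFactorsFinset_conj' (ConjAct.toConjAct τ) z c).mpr hcf
    rwa [ConjAct.toConjAct_smul, ConjAct.toConjAct_smul, hzc] at this
  have hcard : (τ * c * τ⁻¹).support.card = c.support.card := by
    rw [support_conj, Finset.card_map]
  have hinj := Multiset.inj_on_of_nodup_map (by rwa [← cycleType_def] : (z.cycleFactorsFinset.val.map (Finset.card ∘ support)).Nodup)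
  exact hinj _ hmem _ hcf hcard

/-- structure of permutations commuting with a permutation with distinct cycle type -/
lemma commute_structure {z τ : Perm (Fin n)} (hc : Commute τ z)
    (hnodup : (fullCycleType z).Nodup) :
    ∃ e : Perm (Fin n) → ℤ,
      τ = z.cycleFactorsFinset.noncommProd (fun c => c ^ (e c))
        (((cycleFactorsFinset_pairwise_disjoint z).imp
          (fun c d hcd => (hcd.zpow_disjoint_zpow _ _).commute))) := by
  classical
  have hpow : ∀ c ∈ z.cycleFactorsFinset, ∃ i : ℤ, ∀ w ∈ c.support, τ w = (c ^ i) w := by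
    intro c hcf
    have hcyc : c.IsCycle := (mem_cycleFactorsFinset_iff.mp hcf).1
    have hcomm : Commute τ c := by
      have := cycle_fixed_of_commute hc (cycleType_nodup_of_full hnodup) c hcf
      have h' : τ * c = c * τ := by
        have := congrArg (fun s => s * τ) this
        simpa [mul_assoc] using this
      exact h'
    obtain ⟨hc', hzp⟩ := hcyc.commute_iff.mp hcomm
    obtain ⟨i, hi⟩ := Subgroup.mem_zpowers_iff.mp hzp
    refine ⟨i, fun w hw => ?_⟩
    have := congrFun (congrArg (fun p => (p : Perm (Fin n)) ∘ id) hi) w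
    simp only [Function.comp_apply, id_eq] at this
    rw [this, ofSubtype_apply_of_mem _ hw]
    simp
  set e : Perm (Fin n) → ℤ := fun c =>
    if h : ∃ i : ℤ, ∀ w ∈ c.support, τ w = (c ^ i) w then h.choose else 0 with he
  refine ⟨e, ?_⟩
  have heval : ∀ c ∈ z.cycleFactorsFinset, ∀ w ∈ c.support, τ w = (c ^ (e c)) w := by
    intro c hcf w hw
    have hex := hpow c hcf
    rw [he]
    simp only [dif_pos hex]
    exact hex.choose_spec w hw
  have hdisj : ((z.cycleFactorsFinset : Set (Perm (Fin n)))).Pairwise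
      (fun c d => Disjoint c.support d.support) :=
    (cycleFactorsFinset_pairwise_disjoint z).imp (fun c d hcd => hcd.disjoint_support)
  have hBE := blocks_eval (fun c => c ^ (e c)) (fun c => c.support) z.cycleFactorsFinset
    (fun c _ => support_zpow_le c (e c)) hdisj
    (((cycleFactorsFinset_pairwise_disjoint z).imp
      (fun c d hcd => (hcd.zpow_disjoint_zpow _ _).commute)))
  apply Equiv.ext
  intro w
  by_cases hw : w ∈ z.support
  · have hcmem : z.cycleOf w ∈ z.cycleFactorsFinset :=
      cycleOf_mem_cycleFactorsFinset_iff.mpr hw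
    have hwmem : w ∈ (z.cycleOf w).support :=
      mem_support_cycleOf_iff.mpr ⟨SameCycle.refl z w, hw⟩
    rw [(hBE w).2 _ hcmem hwmem]
    exact heval _ hcmem w hwmem
  · rw [(hBE w).1, fix_of_commute hc (fixed_card_le_one hnodup) w hw]
    intro c hcf hwc
    exact hw (mem_cycleFactorsFinset_support_le hcf hwc)

lemma centralizer_le_alternating {z : Perm (Fin n)}
    (hnodup : (fullCycleType z).Nodup) (hodd : ∀ l ∈ fullCycleType z, Odd l) :
    Subgroup.centralizer {z} ≤ alternatingGroup (Fin n) := by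
  intro τ hτ
  have hc : Commute τ z := Subgroup.mem_centralizer_singleton_iff.mp hτ
  obtain ⟨e, rfl⟩ := commute_structure hc hnodup
  rw [mem_alternatingGroup, Finset.map_noncommProd _ _ _ (sign : Perm (Fin n) →* ℤˣ)]
  rw [Finset.noncommProd_eq_prod]
  apply Finset.prod_eq_one
  intro c hcf
  have hcyc : c.IsCycle := (mem_cycleFactorsFinset_iff.mp hcf).1
  have hcard : Odd c.support.card := by
    apply hodd
    have : c.support.card ∈ z.cycleType := by
      rw [cycleType_def]
      exact Multiset.mem_map_of_mem _ hcf
    exact Multiset.mem_add.mpr (Or.inl this)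
  rw [map_zpow, hcyc.sign, hcard.neg_one_pow, neg_neg, one_zpow]

end Structure

section CycleConj

open Equiv Equiv.Perm Finset

variable {n : ℕ}

lemma cycle_conj_pow_even {c : Perm (Fin n)} (hcyc : c.IsCycle)
    (hodd : Odd c.support.card) (hsq : IsSquare c.support.card)
    {i : ℤ} (hpc : (c ^ i).IsCycle) :
    ∃ h : Perm (Fin n), sign h = 1 ∧ h.support ⊆ c.support ∧ h * c * h⁻¹ = c ^ i := by
  classical
  set lam := c.support.card with hlam
  have hord : orderOf c = lam := hcyc.orderOf
  have hlampos : 0 < lam := Finset.card_pos.mpr hcyc.nonempty_support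
  haveI : NeZero lam := ⟨hlampos.ne'⟩
  set a : ℕ := (i % (lam : ℤ)).toNat with ha
  have hanonneg : (0 : ℤ) ≤ i % (lam : ℤ) := Int.emod_nonneg i (by exact_mod_cast hlampos.ne')
  have hpow : c ^ i = c ^ a := by
    conv_lhs => rw [← zpow_mod_orderOf c i]
    rw [hord, ha, ← zpow_natCast, Int.toNat_of_nonneg hanonneg]
  have hcop : a.Coprime lam := by
    have : (c ^ a).IsCycle := hpow ▸ hpc
    have := hcyc.pow_iff.mp this
    rwa [hord] at this
  set u : (ZMod lam)ˣ := ZMod.unitOfCoprime a hcop with hu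
  obtain ⟨x₀, hx₀⟩ := hcyc.nonempty_support
  -- the parametrization of the support of c
  have hmemsup : ∀ k : ℕ, (c ^ k) x₀ ∈ c.support := fun k => pow_apply_mem_support.mpr hx₀
  set E0 : ZMod lam → {w // w ∈ c.support} := fun r => ⟨(c ^ r.val) x₀, hmemsup r.val⟩ with hE0
  have hinj : Function.Injective E0 := by
    intro r s hrs
    have h1 : (c ^ ((r.val : ℤ) - (s.val : ℤ))) x₀ = x₀ := by
      have h2 : (c ^ (r.val : ℤ)) x₀ = (c ^ (s.val : ℤ)) x₀ := by
        rw [zpow_natCast, zpow_natCast]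
        exact Subtype.ext_iff.mp hrs
      have h3 := congrArg (fun w => (c ^ (-(s.val : ℤ))) w) h2
      simp only [← Equiv.Perm.mul_apply, ← zpow_add] at h3
      rw [add_comm] at h3
      simpa [add_neg_cancel, ← sub_eq_add_neg] using h3
    have h4 := (cycle_zpow_mem_support_iff hcyc (mem_support.mp hx₀)).mp h1
    rw [← hlam] at h4
    have h5 : (lam : ℤ) ∣ (r.val : ℤ) - (s.val : ℤ) := Int.dvd_of_emod_eq_zero h4
    have h6 : r.val = s.val := by
      have hr := ZMod.val_lt r
      have hs := ZMod.val_lt s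
      have habs : |(r.val : ℤ) - (s.val : ℤ)| < (lam : ℤ) := by
        rw [abs_lt]
        constructor <;> [push_cast; push_cast] <;> omega
      have := Int.eq_zero_of_abs_lt_dvd h5 habs
      omega
    exact ZMod.val_injective _ h6
  have hsurj : Function.Surjective E0 := by
    rintro ⟨w, hw⟩
    obtain ⟨j, hj⟩ := hcyc.sameCycle (mem_support.mp hx₀) (mem_support.mp hw)
    set j' : ℕ := (j % (lam : ℤ)).toNat with hj'
    have hjnonneg : (0 : ℤ) ≤ j % (lam : ℤ) := Int.emod_nonneg j (by exact_mod_cast hlampos.ne')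
    have hcj : c ^ j = c ^ j' := by
      conv_lhs => rw [← zpow_mod_orderOf c j]
      rw [hord, hj', ← zpow_natCast, Int.toNat_of_nonneg hjnonneg]
    have hjlt : j' < lam := by
      have := Int.emod_lt_of_pos j (by exact_mod_cast hlampos : (0:ℤ) < (lam:ℤ))
      omega
    refine ⟨((j' : ℕ) : ZMod lam), ?_⟩
    rw [hE0]
    apply Subtype.ext
    show (c ^ ((j' : ZMod lam)).val) x₀ = w
    rw [ZMod.val_natCast, Nat.mod_eq_of_lt hjlt, ← hcj, hj]
  have hbij : Function.Bijective E0 := ⟨hinj, hsurj⟩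
  set E : ZMod lam ≃ {w // w ∈ c.support} := Equiv.ofBijective E0 hbij with hE
  have hEapp : ∀ r : ZMod lam, (E r : Fin n) = (c ^ r.val) x₀ := fun r => rfl
  have hEnat : ∀ k : ℕ, (E ((k : ℕ) : ZMod lam) : Fin n) = (c ^ k) x₀ := by
    intro k
    rw [hEapp, ZMod.val_natCast, ← hord, pow_mod_orderOf]
  set μ : Perm (ZMod lam) := MulAction.toPerm u with hμ
  set h : Perm (Fin n) := μ.extendDomain E with hh
  have hfix : ∀ w : Fin n, w ∉ c.support → h w = w := by
    intro w hw
    exact Equiv.Perm.extendDomain_apply_not_subtype μ E hw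
  have hsign : sign h = 1 := by
    rw [hh, sign_extendDomain]
    obtain ⟨m, hm⟩ := hsq
    exact sign_mul_unit_square (Nat.odd_mul.mp (hm ▸ hodd)).1 hm u
  have hsupp : h.support ⊆ c.support := by
    intro w hw
    by_contra hns
    exact (mem_support.mp hw) (hfix w hns)
  refine ⟨h, hsign, hsupp, ?_⟩
  rw [hpow]
  have k1 : ∀ r : ZMod lam, h (E r : Fin n) = (E (u • r) : Fin n) := by
    intro r
    exact Equiv.Perm.extendDomain_apply_image μ E r
  have k2 : ∀ r : ZMod lam, h⁻¹ (E r : Fin n) = (E (u⁻¹ • r) : Fin n) := by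
    intro r
    rw [Equiv.Perm.inv_eq_iff_eq, k1, smul_inv_smul]
  have k3 : ∀ r : ZMod lam, c (E r : Fin n) = (E (r + 1) : Fin n) := by
    intro r
    have hr : r = ((r.val : ℕ) : ZMod lam) := by simp [ZMod.natCast_val, ZMod.cast_id]
    rw [hr]
    rw [hEnat]
    have : c ((c ^ r.val) x₀) = (c ^ (r.val + 1)) x₀ := by
      rw [← Equiv.Perm.mul_apply, ← pow_succ']
    rw [this]
    rw [show ((r.val : ℕ) : ZMod lam) + 1 = (((r.val + 1 : ℕ)) : ZMod lam) by push_cast; ring]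
    rw [hEnat]
  have k4 : ∀ r : ZMod lam, (c ^ a) (E r : Fin n) = (E (r + (a : ZMod lam)) : Fin n) := by
    intro r
    have hr : r = ((r.val : ℕ) : ZMod lam) := by simp [ZMod.natCast_val, ZMod.cast_id]
    rw [hr, hEnat]
    have : (c ^ a) ((c ^ r.val) x₀) = (c ^ (r.val + a)) x₀ := by
      rw [← Equiv.Perm.mul_apply, ← pow_add, add_comm]
    rw [this]
    rw [show ((r.val : ℕ) : ZMod lam) + (a : ZMod lam) = (((r.val + a : ℕ)) : ZMod lam) by push_cast; ring]
    rw [hEnat]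
  apply Equiv.ext
  intro w
  by_cases hw : w ∈ c.support
  · have hwE : w = (E (E.symm ⟨w, hw⟩) : Fin n) := by simp
    rw [hwE]
    set r := E.symm ⟨w, hw⟩
    rw [Equiv.Perm.mul_apply, Equiv.Perm.mul_apply, k2, k3, k1, k4]
    congr 2
    have hucoe : (u : ZMod lam) = (a : ZMod lam) := rfl
    calc u • (u⁻¹ • r + 1) = r + u • 1 := by
          rw [smul_add, smul_inv_smul]
    _ = r + (a : ZMod lam) := by
          congr 1
          show (u : ZMod lam) * 1 = (a : ZMod lam)
          rw [mul_one, hucoe]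
  · have h1 : h⁻¹ w = w := by
      rw [Equiv.Perm.inv_eq_iff_eq]
      exact (hfix w hw).symm
    have h2 : c w = w := notMem_support.mp hw
    have h3 : h w = w := hfix w hw
    have h4 : (c ^ a) w = w := by
      have : w ∉ (c ^ a).support := fun hmem => hw (support_pow_le c a hmem)
      exact notMem_support.mp this
    rw [Equiv.Perm.mul_apply, Equiv.Perm.mul_apply, h1, h2, h3, h4]

end CycleConj

section Main

open Equiv Equiv.Perm Finset

variable {n : ℕ}

lemma card_finset_sum_multiset {ι : Type*} (s : Finset ι) (f : ι → Multiset ℕ) :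
    Multiset.card (∑ i ∈ s, f i) = ∑ i ∈ s, Multiset.card (f i) := by
  classical
  induction s using Finset.induction_on with
  | empty => simp
  | @insert a s ha ih => rw [Finset.sum_insert ha, Finset.sum_insert ha, Multiset.card_add, ih]

lemma centralizer_conj_map (g z : Perm (Fin n)) :
    (Subgroup.centralizer {z}).map (MulAut.conj g).toMonoidHom
      = Subgroup.centralizer {g * z * g⁻¹} := by
  ext h
  simp only [Subgroup.mem_map, Subgroup.mem_centralizer_singleton_iff,
    MulEquiv.coe_toMonoidHom, MulAut.conj_apply]
  constructor
  · rintro ⟨k, hk, rfl⟩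
    have : g * k * g⁻¹ * (g * z * g⁻¹) = g * (k * z) * g⁻¹ := by group
    rw [this, hk]
    group
  · intro hh
    refine ⟨g⁻¹ * h * g, ?_, by group⟩
    have h1 : g⁻¹ * (h * (g * z * g⁻¹)) * g = g⁻¹ * h * g * z := by group
    have h2 : g⁻¹ * ((g * z * g⁻¹) * h) * g = z * (g⁻¹ * h * g) := by group
    rw [← h1, ← h2, hh]

lemma fullCycleType_eq_of_isConj {σ τ : Perm (Fin n)} (h : IsConj σ τ) :
    fullCycleType σ = fullCycleType τ := by
  have hct : σ.cycleType = τ.cycleType := isConj_iff_cycleType_eq.mp h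
  unfold fullCycleType
  rw [hct, ← sum_cycleType σ, ← sum_cycleType τ, hct]

/-- Let `x ∈ Aₙ` have cycle type with all parts distinct and odd, every part a perfect
square. If `x` and `y` represent the two `Aₙ`-classes into which the `Sₙ`-class of `x`
splits (i.e. `y` is conjugate to `x` in `Sₙ` but not in `Aₙ`), then `x` and `y` are not
z-conjugate in `Aₙ`: `Z_{Aₙ}(x)` and `Z_{Aₙ}(y)` are not conjugate subgroups in `Aₙ`. -/
theorem stmt_17 (n : ℕ) (x y : Equiv.Perm (Fin n))
    (hx : x ∈ alternatingGroup (Fin n))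
    (hnodup : (fullCycleType x).Nodup)
    (hodd : ∀ l ∈ fullCycleType x, Odd l)
    (hsq : ∀ l ∈ fullCycleType x, IsSquare l)
    (hconjS : IsConj x y)
    (hnotconjA : ¬ ∃ h ∈ alternatingGroup (Fin n), h * x * h⁻¹ = y) :
    ¬ ∃ g ∈ alternatingGroup (Fin n),
      altCentralizer y = (altCentralizer x).map (MulAut.conj g).toMonoidHom := by
  classical
  rintro ⟨g, hgA, hmap⟩
  set x' := g * x * g⁻¹ with hx'
  have hconjx' : IsConj x x' := isConj_iff.mpr ⟨g, rfl⟩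
  have hconjyx' : IsConj x' y := hconjx'.symm.trans hconjS
  have hfcx' : fullCycleType x' = fullCycleType x := (fullCycleType_eq_of_isConj hconjx').symm
  have hfcy : fullCycleType y = fullCycleType x := (fullCycleType_eq_of_isConj hconjS).symm
  -- centralizers are inside the alternating group
  have hcx : Subgroup.centralizer {x} ≤ alternatingGroup (Fin n) :=
    centralizer_le_alternating hnodup hodd
  have hcy : Subgroup.centralizer {y} ≤ alternatingGroup (Fin n) :=
    centralizer_le_alternating (hfcy ▸ hnodup) (fun l hl => hodd l (hfcy ▸ hl))
  have h1 : altCentralizer y = Subgroup.centralizer {y} := inf_eq_left.mpr hcy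
  have h2 : altCentralizer x = Subgroup.centralizer {x} := inf_eq_left.mpr hcx
  have h3 : Subgroup.centralizer {y} = Subgroup.centralizer {x'} := by
    rw [← h1, hmap, h2, centralizer_conj_map]
  -- y commutes with x'
  have hyx' : Commute y x' := by
    have hyy : y ∈ Subgroup.centralizer {y} :=
      Subgroup.mem_centralizer_singleton_iff.mpr rfl
    rw [h3] at hyy
    exact Subgroup.mem_centralizer_singleton_iff.mp hyy
  obtain ⟨e, hyeq⟩ := commute_structure hyx' (hfcx' ▸ hnodup)
  set S := x'.cycleFactorsFinset with hS
  set k : Perm (Fin n) → Perm (Fin n) := fun c => c ^ (e c) with hk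
  have hdisjS : (S : Set (Perm (Fin n))).Pairwise Perm.Disjoint :=
    cycleFactorsFinset_pairwise_disjoint x'
  have hdisjk : (S : Set (Perm (Fin n))).Pairwise fun c d => Perm.Disjoint (k c) (k d) :=
    hdisjS.imp (fun c d hcd => hcd.zpow_disjoint_zpow _ _)
  have hcommk : (S : Set (Perm (Fin n))).Pairwise (Function.onFun Commute k) :=
    hdisjk.imp (fun c d hcd => hcd.commute)
  -- support facts
  have hsuppx' : x'.support = S.biUnion fun c => c.support := by
    have h4 := support_noncommProd (k := id) (s := S) (hdisjS.imp (fun c d h => h))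
    rwa [cycleFactorsFinset_noncommProd x'] at h4
  have hsuppy : y.support = S.biUnion fun c => (k c).support := by
    rw [hyeq]
    exact support_noncommProd hdisjk
  have hcardeq : y.support.card = x'.support.card := by
    rw [← sum_cycleType, ← sum_cycleType, isConj_iff_cycleType_eq.mp hconjyx']
  have hdisjsupp : (S : Set (Perm (Fin n))).Pairwise fun c d =>
      Disjoint c.support d.support := hdisjS.imp fun c d h => h.disjoint_support
  have hdisjsuppk : (S : Set (Perm (Fin n))).Pairwise fun c d =>
      Disjoint (k c).support (k d).support := hdisjk.imp fun c d h => h.disjoint_support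
  -- each k c has full support
  have hsub : ∀ c ∈ S, (k c).support ⊆ c.support := fun c _ => support_zpow_le c (e c)
  have hsuppkc : ∀ c ∈ S, (k c).support = c.support := by
    have hsum1 : ∑ c ∈ S, (k c).support.card = y.support.card := by
      rw [hsuppy, Finset.card_biUnion]
      intro c hc d hd hcd
      exact hdisjsuppk hc hd hcd
    have hsum2 : ∑ c ∈ S, c.support.card = x'.support.card := by
      rw [hsuppx', Finset.card_biUnion]
      intro c hc d hd hcd
      exact hdisjsupp hc hd hcd
    have hle : ∀ c ∈ S, (k c).support.card ≤ c.support.card :=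
      fun c hc => Finset.card_le_card (hsub c hc)
    have heqs : ∀ c ∈ S, (k c).support.card = c.support.card := by
      rw [← Finset.sum_eq_sum_iff_of_le hle, hsum1, hsum2, hcardeq]
    intro c hc
    exact Finset.eq_of_subset_of_card_le (hsub c hc) (le_of_eq (heqs c hc).symm)
  -- each k c is a cycle
  have hkcyc : ∀ c ∈ S, (k c).IsCycle := by
    have hct : y.cycleType = ∑ c ∈ S, (k c).cycleType := by
      rw [hyeq]
      exact Disjoint.cycleType_noncommProd hdisjk
    have hcty : Multiset.card y.cycleType = S.card := by
      rw [isConj_iff_cycleType_eq.mp hconjyx'.symm, cycleType_def, Multiset.card_map]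
      rfl
    have hsumcard : ∑ c ∈ S, Multiset.card (k c).cycleType = S.card := by
      rw [← card_finset_sum_multiset, ← hct, hcty]
    have hge1 : ∀ c ∈ S, 1 ≤ Multiset.card (k c).cycleType := by
      intro c hc
      rw [Nat.one_le_iff_ne_zero]
      intro h0
      have : (k c).cycleType = 0 := Multiset.card_eq_zero.mp h0
      have hone : k c = 1 := cycleType_eq_zero.mp this
      have := hsuppkc c hc
      rw [hone, support_one] at this
      have hcy : c.IsCycle := (mem_cycleFactorsFinset_iff.mp hc).1
      exact Finset.Nonempty.ne_empty hcy.nonempty_support this.symm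
    have hall1 : ∀ c ∈ S, Multiset.card (k c).cycleType = 1 := by
      have h5 : ∑ _c ∈ S, 1 = S.card := by simp
      have h6 := (Finset.sum_eq_sum_iff_of_le hge1).mp (by rw [hsumcard, h5])
      intro c hc
      exact (h6 c hc).symm
    intro c hc
    exact card_cycleType_eq_one.mp (hall1 c hc)
  -- produce per-cycle even conjugators
  have hex : ∀ c ∈ S, ∃ h : Perm (Fin n),
      sign h = 1 ∧ h.support ⊆ c.support ∧ h * c * h⁻¹ = c ^ (e c) := by
    intro c hc
    have hcy : c.IsCycle := (mem_cycleFactorsFinset_iff.mp hc).1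
    have hmemct : c.support.card ∈ fullCycleType x' := by
      apply Multiset.mem_add.mpr
      left
      rw [cycleType_def]
      exact Multiset.mem_map_of_mem _ hc
    have hoc : Odd c.support.card := (hfcx' ▸ hodd) _ hmemct
    have hsc : IsSquare c.support.card := by
      apply hsq
      rwa [← hfcx']
    exact cycle_conj_pow_even hcy hoc hsc (hkcyc c hc)
  set H : Perm (Fin n) → Perm (Fin n) := fun c =>
    if hc : c ∈ S then (hex c hc).choose else 1 with hH
  have hHsign : ∀ c ∈ S, sign (H c) = 1 := by
    intro c hc
    rw [hH]; simp only [dif_pos hc]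
    exact (hex c hc).choose_spec.1
  have hHsub : ∀ c ∈ S, (H c).support ⊆ c.support := by
    intro c hc
    rw [hH]; simp only [dif_pos hc]
    exact (hex c hc).choose_spec.2.1
  have hHconj : ∀ c ∈ S, (H c) * c * (H c)⁻¹ = c ^ (e c) := by
    intro c hc
    rw [hH]; simp only [dif_pos hc]
    exact (hex c hc).choose_spec.2.2
  have hcommH : (S : Set (Perm (Fin n))).Pairwise (Function.onFun Commute H) := by
    intro c hc d hd hcd
    have : Perm.Disjoint (H c) (H d) := by
      rw [disjoint_iff_disjoint_support]
      exact Finset.disjoint_of_subset_left (hHsub c hc)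
        (Finset.disjoint_of_subset_right (hHsub d hd) (hdisjsupp hc hd hcd))
    exact this.commute
  set τ : Perm (Fin n) := S.noncommProd H hcommH with hτ
  have hτA : τ ∈ alternatingGroup (Fin n) := by
    rw [mem_alternatingGroup, hτ, Finset.map_noncommProd _ _ _ (sign : Perm (Fin n) →* ℤˣ),
      Finset.noncommProd_eq_prod]
    exact Finset.prod_eq_one (fun c hc => hHsign c hc)
  -- evaluation lemmas
  have hBEH := blocks_eval H (fun c => c.support) S hHsub hdisjsupp hcommH
  have hBEk := blocks_eval k (fun c => c.support) S hsub hdisjsupp hcommk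
  have hyval : ∀ w : Fin n, y w = (S.noncommProd k hcommk) w := by
    intro w
    rw [hyeq]
  have hstab : ∀ (P : Perm (Fin n)) (B : Finset (Fin n)), P.support ⊆ B →
      ∀ w ∈ B, P w ∈ B := by
    intro P B hPB w hwB
    by_cases h : w ∈ P.support
    · exact hPB (apply_mem_support.mpr h)
    · rwa [notMem_support.mp h]
  have hτconj : τ * x' * τ⁻¹ = y := by
    apply Equiv.ext
    intro w
    by_cases hw : w ∈ x'.support
    · have c₀mem : x'.cycleOf w ∈ S := cycleOf_mem_cycleFactorsFinset_iff.mpr hw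
      set c₀ := x'.cycleOf w with hc₀
      have hwc₀ : w ∈ c₀.support :=
        mem_support_cycleOf_iff.mpr ⟨SameCycle.refl x' w, hw⟩
      have hw'mem : (H c₀)⁻¹ w ∈ c₀.support := by
        apply hstab (H c₀)⁻¹ c₀.support _ w hwc₀
        rw [support_inv]
        exact hHsub c₀ c₀mem
      have hτinv : τ⁻¹ w = (H c₀)⁻¹ w := by
        rw [Equiv.Perm.inv_eq_iff_eq]
        rw [(hBEH ((H c₀)⁻¹ w)).2 c₀ c₀mem hw'mem]
        exact (Equiv.apply_symm_apply _ w).symm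
      have hx'w' : x' ((H c₀)⁻¹ w) = c₀ ((H c₀)⁻¹ w) :=
        ((mem_cycleFactorsFinset_iff.mp c₀mem).2 _ hw'mem).symm
      have hc₀w'mem : c₀ ((H c₀)⁻¹ w) ∈ c₀.support := apply_mem_support.mpr hw'mem
      rw [Equiv.Perm.mul_apply, Equiv.Perm.mul_apply, hτinv, hx'w',
        (hBEH (c₀ ((H c₀)⁻¹ w))).2 c₀ c₀mem hc₀w'mem]
      have hlhs : H c₀ (c₀ ((H c₀)⁻¹ w)) = (H c₀ * c₀ * (H c₀)⁻¹) w := rfl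
      rw [hlhs, hHconj c₀ c₀mem, hyval w, (hBEk w).2 c₀ c₀mem hwc₀]
    · have hall : ∀ c ∈ S, w ∉ c.support :=
        fun c hc hwc => hw (mem_cycleFactorsFinset_support_le hc hwc)
      have hτw : τ w = w := (hBEH w).1 hall
      have hτinv : τ⁻¹ w = w := by
        rw [Equiv.Perm.inv_eq_iff_eq]
        exact hτw.symm
      rw [Equiv.Perm.mul_apply, Equiv.Perm.mul_apply, hτinv, notMem_support.mp hw, hτw,
        hyval w, (hBEk w).1 hall]
  exact hnotconjA ⟨τ * g, Subgroup.mul_mem _ hτA hgA, by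
    have : τ * g * x * (τ * g)⁻¹ = τ * (g * x * g⁻¹) * τ⁻¹ := by group
    rw [this, ← hx', hτconj]⟩

end Main
end

section
/- Let n ≥ 4 and let ν be a partition of n−3 into distinct odd parts all ≥ 3. Choose disjoint cycles on {4,…,n} realizing ν, let σ be their product (so σ ∈ Aₙ has cycle type 1³ν) and let τ = (1 2 3)·σ (cycle type 3¹ν). Then Z_{Aₙ}(σ) = Z_{Aₙ}(τ); in particular σ and τ are z-conjugate in Aₙ. -/
open Equiv Equiv.Perm Finset

variable {α : Type*} [Fintype α] [DecidableEq α]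

theorem Equiv.Perm.inv_apply_self (f : Perm α) (x : α) : f⁻¹ (f x) = x := f.symm_apply_apply x

theorem Equiv.Perm.apply_inv_self (f : Perm α) (x : α) : f (f⁻¹ x) = x := f.apply_symm_apply x

private theorem commute_of_conj {G : Type*} [Group G] {a b : G} (h : a * b * a⁻¹ = b) :
    Commute a b := by
  have : a * b = a * b * a⁻¹ * a := by group
  rw [h] at this
  exact this

private theorem conj_mem_cycleFactorsFinset {f x g : Perm α} (hx : Commute x f)
    (hg : g ∈ f.cycleFactorsFinset) : x * g * x⁻¹ ∈ f.cycleFactorsFinset := by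
  rw [mem_cycleFactorsFinset_iff] at hg ⊢
  refine ⟨hg.1.conj, ?_⟩
  intro a ha
  rw [support_conj] at ha
  obtain ⟨b, hb, rfl⟩ := Finset.mem_map.mp ha
  simp only [toEmbedding_apply, mul_apply, inv_apply_self]
  rw [hg.2 b hb, ← mul_apply x f, hx.eq, mul_apply]

private theorem le_count_cycleType {f : Perm α} {s : ℕ} (t : Finset (Perm α))
    (ht : t ⊆ f.cycleFactorsFinset) (hts : ∀ g ∈ t, #g.support = s) :
    t.card ≤ Multiset.count s f.cycleType := by
  rw [cycleType_def, Multiset.count_map]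
  calc t.card = Multiset.card t.val := rfl
    _ ≤ _ := Multiset.card_le_card ?_
  rw [Multiset.le_iff_count]
  intro g
  by_cases hgt : g ∈ t
  · have h1 : Multiset.count g t.val = 1 := by
      rw [Multiset.count_eq_one_of_mem t.nodup hgt]
    rw [h1]
    rw [Multiset.one_le_count_iff_mem, Multiset.mem_filter]
    exact ⟨ht hgt, (hts g hgt).symm⟩
  · simp [Multiset.count_eq_zero_of_notMem, hgt]

private theorem sign_eq_one_aux :
    ∀ (N : ℕ) (f x : Perm α), #f.support ≤ N → Commute x f →
      f.cycleType.Nodup → (∀ i ∈ f.cycleType, Odd i) → x.support ⊆ f.support →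
      Perm.sign x = 1 := by
  intro N
  induction N with
  | zero =>
    intro f x hN _ _ _ hsupp
    have hf : f.support = ∅ := Finset.card_eq_zero.mp (Nat.le_zero.mp hN)
    have hx : x = 1 := by
      rw [← support_eq_empty_iff]
      exact Finset.subset_empty.mp (hf ▸ hsupp)
    simp [hx]
  | succ N ih =>
    intro f x hN hc hnd hodd hsupp
    by_cases hf1 : f = 1
    · subst hf1
      have hx : x = 1 := by
        rw [← support_eq_empty_iff]
        simpa using hsupp
      simp [hx]
    obtain ⟨g, hg⟩ : f.cycleFactorsFinset.Nonempty := by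
      rw [Finset.nonempty_iff_ne_empty, Ne, cycleFactorsFinset_eq_empty_iff]
      exact hf1
    have hgcyc : g.IsCycle := (mem_cycleFactorsFinset_iff.mp hg).1
    have hmemct : #g.support ∈ f.cycleType := by
      rw [cycleType_def, Multiset.mem_map]
      exact ⟨g, hg, rfl⟩
    -- x commutes with g
    have hxg : Commute x g := by
      have hmem := conj_mem_cycleFactorsFinset hc hg
      by_cases heq : x * g * x⁻¹ = g
      · exact commute_of_conj heq
      · exfalso
        have h2 : 2 ≤ Multiset.count #g.support f.cycleType := by
          have := le_count_cycleType (f := f) (s := #g.support) {g, x * g * x⁻¹} ?_ ?_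
          · rwa [Finset.card_insert_of_notMem (by simpa using (Ne.symm heq)),
              Finset.card_singleton] at this
          · intro p hp
            rcases Finset.mem_insert.mp hp with rfl | hp
            · exact hg
            · rw [Finset.mem_singleton.mp hp]; exact hmem
          · intro p hp
            rcases Finset.mem_insert.mp hp with rfl | hp
            · rfl
            · rw [Finset.mem_singleton.mp hp]; exact card_support_conj
        have h1 : Multiset.count #g.support f.cycleType ≤ 1 :=
          Multiset.nodup_iff_count_le_one.mp hnd _
        omega
    obtain ⟨hinv, hz⟩ := hgcyc.commute_iff.mp hxg
    set y := ofSubtype (x.subtypePerm hinv) with hy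
    obtain ⟨k, hk⟩ := Subgroup.mem_zpowers_iff.mp hz
    have hxy_on : ∀ a ∈ g.support, y a = x a := fun a ha => by
      rw [hy, ofSubtype_apply_of_mem _ ha]; rfl
    have hyfix : ∀ a, a ∉ g.support → y a = a := fun a ha =>
      ofSubtype_apply_of_not_mem _ ha
    have hysupp : y.support ⊆ g.support := fun a ha => by
      by_contra hmem
      exact (mem_support.mp ha) (hyfix a hmem)
    have hsigny : Perm.sign y = 1 := by
      have hsg : Perm.sign g = 1 := by
        rw [hgcyc.sign, (hodd _ hmemct).neg_one_pow, neg_neg]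
      rw [← hk, map_zpow, hsg, one_zpow]
    set f' := f * g⁻¹ with hf'
    have hdisj : Disjoint f' g := disjoint_mul_inv_of_mem_cycleFactorsFinset hg
    have hfeq : f' * g = f := inv_mul_cancel_right f g
    have hct : f.cycleType = f'.cycleType + g.cycleType := by
      rw [← hfeq, hdisj.cycleType_mul]
    have hctle : f'.cycleType ≤ f.cycleType := hct ▸ Multiset.le_add_right _ _
    have hsupf : f.support = f'.support ∪ g.support := by rw [← hfeq, hdisj.support_mul]
    have hsupdisj : _root_.Disjoint f'.support g.support := hdisj.disjoint_support
    have hcard' : #f'.support ≤ N := by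
      have h2 : 2 ≤ #g.support := hgcyc.two_le_card_support
      have : #f'.support + #g.support = #f.support := by
        rw [hsupf, Finset.card_union_of_disjoint hsupdisj]
      omega
    -- x' := x * y⁻¹
    have hx'supp : (x * y⁻¹).support ⊆ f'.support := by
      intro p hp
      rw [mem_support] at hp
      by_contra hpf'
      apply hp
      by_cases hpg : p ∈ g.support
      · have hq : y⁻¹ p ∈ g.support := by
          by_contra hq
          have h1 : y (y⁻¹ p) = y⁻¹ p := hyfix _ hq
          rw [apply_inv_self] at h1
          rw [← h1] at hq
          exact hq hpg
        simp only [mul_apply]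
        rw [← hxy_on _ hq]
        exact apply_inv_self y p
      · have hpf : p ∉ f.support := by
          rw [hsupf]
          simp [hpf', hpg]
        have hxp : x p = p := by
          by_contra hxp
          exact hpf (hsupp (mem_support.mpr hxp))
        have hyp : y⁻¹ p = p := by
          calc y⁻¹ p = y⁻¹ (y p) := by rw [hyfix p hpg]
          _ = p := inv_apply_self y p
        simp only [mul_apply, hyp, hxp]
    have hx'c : Commute (x * y⁻¹) f' := by
      have h1 : Commute x f' := hc.mul_right hxg.inv_right
      have h2 : Commute y f' := by
        rw [← hk]
        exact (hdisj.commute.symm).zpow_left k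
      exact h1.mul_left h2.inv_left
    have hnd' : f'.cycleType.Nodup := Multiset.nodup_of_le hctle hnd
    have hodd' : ∀ i ∈ f'.cycleType, Odd i := fun i hi => hodd i (Multiset.mem_of_le hctle hi)
    have hs := ih f' (x * y⁻¹) hcard' hx'c hnd' hodd' hx'supp
    rw [show x = (x * y⁻¹) * y by group, map_mul, hs, hsigny, mul_one]

private theorem threeCycle_dichotomy {a b d : α} (hab : a ≠ b) (had : a ≠ d) (hbd : b ≠ d)
    {g : Perm α} (hg : g.support = {a, b, d}) :
    g = Equiv.swap a b * Equiv.swap b d ∨ g = (Equiv.swap a b * Equiv.swap b d)⁻¹ := by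
  set c := Equiv.swap a b * Equiv.swap b d with hc
  have hca : c a = b := by
    rw [hc, mul_apply, Equiv.swap_apply_of_ne_of_ne hab had, Equiv.swap_apply_left]
  have hcb : c b = d := by
    rw [hc, mul_apply, Equiv.swap_apply_left, Equiv.swap_apply_of_ne_of_ne had.symm hbd.symm]
  have hcd : c d = a := by
    rw [hc, mul_apply, Equiv.swap_apply_right, Equiv.swap_apply_right]
  have hia : c⁻¹ a = d := by rw [← hcd, inv_apply_self]
  have hib : c⁻¹ b = a := by rw [← hca, inv_apply_self]
  have hid : c⁻¹ d = b := by rw [← hcb, inv_apply_self]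
  have hcfix : ∀ p, p ≠ a → p ≠ b → p ≠ d → c p = p := fun p h1 h2 h3 => by
    rw [hc, mul_apply, Equiv.swap_apply_of_ne_of_ne h2 h3, Equiv.swap_apply_of_ne_of_ne h1 h2]
  have hifix : ∀ p, p ≠ a → p ≠ b → p ≠ d → c⁻¹ p = p := fun p h1 h2 h3 => by
    conv_lhs => rw [← hcfix p h1 h2 h3]
    exact inv_apply_self c p
  have hmem : ∀ p, p = a ∨ p = b ∨ p = d → g p = a ∨ g p = b ∨ g p = d := by
    intro p hp
    have hp' : p ∈ g.support := by rw [hg]; simp only [Finset.mem_insert, Finset.mem_singleton]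
                                   exact hp
    have := apply_mem_support.mpr hp'
    rw [hg] at this
    simpa using this
  have hane : g a ≠ a := mem_support.mp (by rw [hg]; simp)
  have hbne : g b ≠ b := mem_support.mp (by rw [hg]; simp)
  have hdne : g d ≠ d := mem_support.mp (by rw [hg]; simp)
  have hfix : ∀ p, p ≠ a → p ≠ b → p ≠ d → g p = p := by
    intro p h1 h2 h3
    have : p ∉ g.support := by rw [hg]; simp [h1, h2, h3]
    exact notMem_support.mp this
  rcases hmem a (Or.inl rfl) with h1 | h1 | h1
  · exact absurd h1 hane
  · -- g a = b
    left
    have h2 : g b = d := by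
      rcases hmem b (Or.inr (Or.inl rfl)) with h2 | h2 | h2
      · exfalso
        have h3 : g d = d := by
          rcases hmem d (Or.inr (Or.inr rfl)) with h3 | h3 | h3
          · exact absurd (g.injective (h3.trans h2.symm)) hbd.symm
          · exact absurd (g.injective (h3.trans h1.symm)) had.symm
          · exact h3
        exact hdne h3
      · exact absurd h2 hbne
      · exact h2
    have h3 : g d = a := by
      rcases hmem d (Or.inr (Or.inr rfl)) with h3 | h3 | h3
      · exact h3
      · exact absurd (g.injective (h3.trans h1.symm)) had.symm
      · exact absurd h3 hdne
    refine Equiv.ext fun p => ?_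
    by_cases hpa : p = a
    · rw [hpa, h1, hca]
    by_cases hpb : p = b
    · rw [hpb, h2, hcb]
    by_cases hpd : p = d
    · rw [hpd, h3, hcd]
    · rw [hfix p hpa hpb hpd, hcfix p hpa hpb hpd]
  · -- g a = d
    right
    have h2 : g b = a := by
      rcases hmem b (Or.inr (Or.inl rfl)) with h2 | h2 | h2
      · exact h2
      · exact absurd h2 hbne
      · exact absurd (g.injective (h2.trans h1.symm)) hab.symm
    have h3 : g d = b := by
      rcases hmem d (Or.inr (Or.inr rfl)) with h3 | h3 | h3
      · exact absurd (g.injective (h3.trans h2.symm)) hbd.symm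
      · exact h3
      · exact absurd h3 hdne
    refine Equiv.ext fun p => ?_
    by_cases hpa : p = a
    · rw [hpa, h1, hia]
    by_cases hpb : p = b
    · rw [hpb, h2, hib]
    by_cases hpd : p = d
    · rw [hpd, h3, hid]
    · rw [hfix p hpa hpb hpd, hifix p hpa hpb hpd]

private theorem sign_swap_threeCycles {c h w : Perm α}
    (hc : c.IsThreeCycle) (hh : h.IsThreeCycle)
    (hdisj : _root_.Disjoint c.support h.support)
    (hw1 : ∀ p ∈ c.support, w p ∈ h.support)
    (hw2 : ∀ p ∈ h.support, w p ∈ c.support)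
    (hw3 : ∀ p, p ∉ c.support → p ∉ h.support → w p = p)
    (hwc : Commute (w * w) c) (hwh : Commute (w * w) h) :
    Perm.sign w = -1 := by
  -- support of w is exactly the union
  have hsuppw : w.support = c.support ∪ h.support := by
    ext p
    constructor
    · intro hp
      by_contra hmem
      simp only [Finset.mem_union, not_or] at hmem
      exact mem_support.mp hp (hw3 p hmem.1 hmem.2)
    · intro hp
      rcases Finset.mem_union.mp hp with hp | hp
      · exact mem_support.mpr fun heq => Finset.disjoint_left.mp hdisj hp (heq ▸ hw1 p hp)
      · exact mem_support.mpr fun heq =>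
          Finset.disjoint_left.mp hdisj (heq ▸ hw2 p hp) hp
  -- w² acts as powers of c and h on their supports
  obtain ⟨hinvc, hzc⟩ := hc.isCycle.commute_iff.mp hwc
  obtain ⟨k, hk⟩ := Subgroup.mem_zpowers_iff.mp hzc
  obtain ⟨hinvh, hzh⟩ := hh.isCycle.commute_iff.mp hwh
  obtain ⟨j, hj⟩ := Subgroup.mem_zpowers_iff.mp hzh
  have hwwc : ∀ p ∈ c.support, (w * w) p = (c ^ k) p := by
    intro p hp
    rw [hk, ofSubtype_apply_of_mem _ hp]
    rfl
  have hwwh : ∀ p ∈ h.support, (w * w) p = (h ^ j) p := by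
    intro p hp
    rw [hj, ofSubtype_apply_of_mem _ hp]
    rfl
  have hww : w * w = c ^ k * h ^ j := by
    refine Equiv.ext fun p => ?_
    by_cases hp : p ∈ c.support
    · have hfix : (h ^ j) p = p := by
        have : p ∉ h.support := Finset.disjoint_left.mp hdisj hp
        exact notMem_support.mp fun hmem => this (support_zpow_le h j hmem)
      rw [hwwc p hp, mul_apply, hfix]
    by_cases hp2 : p ∈ h.support
    · have hmem : (h ^ j) p ∈ h.support := zpow_apply_mem_support.mpr hp2
      have hfix : (c ^ k) ((h ^ j) p) = (h ^ j) p := by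
        have : (h ^ j) p ∉ c.support := Finset.disjoint_right.mp hdisj hmem
        exact notMem_support.mp fun hm => this (support_zpow_le c k hm)
      rw [hwwh p hp2, mul_apply, hfix]
    · have hwp : w p = p := hw3 p hp hp2
      have h1 : (h ^ j) p = p :=
        notMem_support.mp fun hm => hp2 (support_zpow_le h j hm)
      have h2 : (c ^ k) p = p :=
        notMem_support.mp fun hm => hp (support_zpow_le c k hm)
      simp only [mul_apply, hwp, h1, h2]
  -- c and h cubed are one
  have hc3 : c ^ (3 : ℕ) = 1 := by rw [← hc.orderOf]; exact pow_orderOf_eq_one c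
  have hh3 : h ^ (3 : ℕ) = 1 := by rw [← hh.orderOf]; exact pow_orderOf_eq_one h
  have hcomm : Commute (c ^ k) (h ^ j) := by
    have : Equiv.Perm.Disjoint c h := disjoint_iff_disjoint_support.mpr hdisj
    exact (this.commute).zpow_zpow k j
  -- w ^ 6 = 1
  have hw6 : w ^ (6 : ℕ) = 1 := by
    have h1 : w ^ (6 : ℕ) = (w * w) ^ (3 : ℕ) := by
      rw [← pow_two, ← pow_mul]
    have hck : (c ^ k) ^ (3 : ℕ) = 1 := by
      rw [← zpow_natCast (c ^ k) 3, ← zpow_mul, mul_comm, zpow_mul, zpow_natCast, hc3, one_zpow]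
    have hch : (h ^ j) ^ (3 : ℕ) = 1 := by
      rw [← zpow_natCast (h ^ j) 3, ← zpow_mul, mul_comm, zpow_mul, zpow_natCast, hh3, one_zpow]
    rw [h1, hww, hcomm.mul_pow, hck, hch, one_mul]
  -- odd powers of w map c.support into h.support and vice versa
  have hoddmap : ∀ t : ℕ, (∀ p ∈ c.support, (w ^ (2 * t + 1)) p ∈ h.support) ∧
      (∀ p ∈ h.support, (w ^ (2 * t + 1)) p ∈ c.support) := by
    intro t
    have hpow : w ^ (2 * t + 1) = w * (w * w) ^ t := by
      rw [← pow_two, ← pow_mul, pow_succ']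
    constructor
    · intro p hp
      have hm : ((w * w) ^ t) p ∈ c.support := by
        rw [hww, hcomm.mul_pow]
        have hfix : ((h ^ j) ^ t) p = p := by
          refine notMem_support.mp fun hm => ?_
          have := support_pow_le (h ^ j) t hm
          exact (Finset.disjoint_left.mp hdisj hp) (support_zpow_le h j this)
        rw [mul_apply, hfix, ← zpow_natCast (c ^ k) t, ← zpow_mul]
        exact zpow_apply_mem_support.mpr hp
      rw [hpow, mul_apply]
      exact hw1 _ hm
    · intro p hp
      have hmem : ((h ^ j) ^ t) p ∈ h.support := by
        rw [← zpow_natCast (h ^ j) t, ← zpow_mul]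
        exact zpow_apply_mem_support.mpr hp
      have hm : ((w * w) ^ t) p ∈ h.support := by
        rw [hww, hcomm.mul_pow, mul_apply]
        have hfix : ((c ^ k) ^ t) (((h ^ j) ^ t) p) = ((h ^ j) ^ t) p := by
          refine notMem_support.mp fun hm => ?_
          have := support_pow_le (c ^ k) t hm
          exact (Finset.disjoint_right.mp hdisj hmem) (support_zpow_le c k this)
        rw [hfix]
        exact hmem
      rw [hpow, mul_apply]
      exact hw2 _ hm
  -- every element of the cycle type of w is 2 or 6
  have hmemct : ∀ ℓ ∈ w.cycleType, ℓ = 2 ∨ ℓ = 6 := by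
    intro ℓ hℓ
    rw [cycleType_def, Multiset.mem_map] at hℓ
    obtain ⟨g, hg, rfl⟩ := hℓ
    have hgc : g.IsCycle := (mem_cycleFactorsFinset_iff.mp hg).1
    have hdvd : #g.support ∣ 6 := by
      have h1 : (#g.support : ℕ) ∣ orderOf w := by
        rw [← lcm_cycleType]
        apply Multiset.dvd_lcm
        rw [cycleType_def, Multiset.mem_map]
        exact ⟨g, hg, rfl⟩
      exact h1.trans (orderOf_dvd_of_pow_eq_one hw6)
    have heven : Even ((Finset.card ∘ support) g) := by
      obtain ⟨p, hp⟩ := hgc.nonempty_support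
      have hgcy : g = w.cycleOf p := cycle_is_cycleOf hp hg
      have horder : orderOf g = #g.support := hgc.orderOf
      have hfix : (w ^ #g.support) p = p := by
        rw [← cycleOf_pow_apply_self w p, ← hgcy, ← horder, pow_orderOf_eq_one, one_apply]
      have hpK : p ∈ c.support ∪ h.support := by
        rw [← hsuppw]
        exact mem_cycleFactorsFinset_support_le hg hp
      by_contra hoddc
      rw [Nat.not_even_iff_odd] at hoddc
      obtain ⟨t, ht⟩ := hoddc
      simp only [Function.comp_apply] at ht
      rw [ht] at hfix
      have ht' : #g.support = 2 * t + 1 := ht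
      rcases Finset.mem_union.mp hpK with hpc | hpc
      · have hmem := (hoddmap t).1 p hpc
        rw [hfix] at hmem
        exact Finset.disjoint_left.mp hdisj hpc hmem
      · have hmem := (hoddmap t).2 p hpc
        rw [hfix] at hmem
        exact Finset.disjoint_right.mp hdisj hpc hmem
    simp only [Function.comp_apply] at heven ⊢
    have h6 : #g.support ≤ 6 := Nat.le_of_dvd (by norm_num) hdvd
    set m := #g.support with hm
    interval_cases m <;> revert hdvd heven <;> decide
  -- the sum of the cycle type is 6
  have hsum : w.cycleType.sum = 6 := by
    rw [sum_cycleType, hsuppw, Finset.card_union_of_disjoint hdisj,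
      hc.card_support, hh.card_support]
  -- the number of cycles is odd
  have hcardodd : Odd (Multiset.card w.cycleType) := by
    have hle : 2 * Multiset.card w.cycleType ≤ 6 := by
      have h2 : Multiset.card w.cycleType • 2 ≤ w.cycleType.sum := by
        apply Multiset.card_nsmul_le_sum
        intro x hx
        rcases hmemct x hx with rfl | rfl <;> norm_num
      rw [hsum, smul_eq_mul] at h2
      omega
    have hne0 : Multiset.card w.cycleType ≠ 0 := by
      intro h0
      rw [Multiset.card_eq_zero.mp h0] at hsum
      simp at hsum
    have hne2 : Multiset.card w.cycleType ≠ 2 := by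
      intro h2
      obtain ⟨u, v, huv⟩ := Multiset.card_eq_two.mp h2
      have hu : u ∈ w.cycleType := by rw [huv]; simp
      have hv : v ∈ w.cycleType := by rw [huv]; simp
      have hsum' : u + v = 6 := by
        rw [huv] at hsum
        simpa using hsum
      rcases hmemct u hu with rfl | rfl <;> rcases hmemct v hv with rfl | rfl <;> omega
    have : Multiset.card w.cycleType = 1 ∨ Multiset.card w.cycleType = 3 := by omega
    rcases this with h | h <;> rw [h] <;> decide
  rw [sign_of_cycleType, hsum]
  have : Odd (6 + Multiset.card w.cycleType) := by
    rcases hcardodd with ⟨t, ht⟩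
    exact ⟨t + 3, by omega⟩
  rw [this.neg_one_pow]

private theorem commute_threeCycle_of_commute_base {a b d : α} (hab : a ≠ b) (had : a ≠ d)
    (hbd : b ≠ d) {f x : Perm α} (hsupp : f.support = ({a, b, d} : Finset α)ᶜ)
    (hnd : f.cycleType.Nodup) (hodd : ∀ i ∈ f.cycleType, Odd i)
    (hx : Perm.sign x = 1) (hcomm : Commute x f) :
    Commute x (Equiv.swap a b * Equiv.swap b d) := by
  set c := Equiv.swap a b * Equiv.swap b d with hc
  have hsc : c.support = {a, b, d} := support_swap_mul_swap (by simp [hab, had, hbd])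
  have hcard3 : #({a, b, d} : Finset α) = 3 := by
    rw [Finset.card_insert_of_notMem (by simp [hab, had]),
      Finset.card_insert_of_notMem (by simp [hbd]), Finset.card_singleton]
  have hinv : ∀ p, p ∈ f.support ↔ x p ∈ f.support := fun p => (mem_support_iff_of_commute hcomm p).symm
  set v := ofSubtype (x.subtypePerm fun p => (hinv p).symm) with hv
  have hv_on : ∀ p ∈ f.support, v p = x p := fun p hp => by
    rw [hv, ofSubtype_apply_of_mem _ hp]; rfl
  have hvfix : ∀ p, p ∉ f.support → v p = p := fun p hp => ofSubtype_apply_of_not_mem _ hp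
  have hvsupp : v.support ⊆ f.support := fun p hp => by
    by_contra hm; exact mem_support.mp hp (hvfix p hm)
  have hvcomm : Commute v f := by
    have heq : v * f = f * v := by
      refine Equiv.ext fun p => ?_
      simp only [mul_apply]
      by_cases hp : p ∈ f.support
      · rw [hv_on _ (apply_mem_support.mpr hp), hv_on _ hp]
        have := Equiv.ext_iff.mp hcomm.eq p
        simpa [mul_apply] using this
      · have hfp : f p = p := notMem_support.mp hp
        rw [hfp, hvfix p hp, hfp]
    exact heq
  have hsv : Perm.sign v = 1 := sign_eq_one_aux #f.support f v le_rfl hvcomm hnd hodd hvsupp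
  set u := x * v⁻¹ with hu
  have hsu : Perm.sign u = 1 := by rw [hu, map_mul, map_inv, hsv, hx]; norm_num
  have husupp : u.support ⊆ {a, b, d} := by
    intro p hp
    by_contra hm
    have hpf : p ∈ f.support := by rw [hsupp]; exact Finset.mem_compl.mpr hm
    apply mem_support.mp hp
    have hq : v⁻¹ p ∈ f.support := by
      by_contra hq
      have h1 : v (v⁻¹ p) = v⁻¹ p := hvfix _ hq
      rw [apply_inv_self] at h1
      rw [← h1] at hq
      exact hq hpf
    rw [hu, mul_apply, ← hv_on _ hq, apply_inv_self]
  have hucomm : Commute u c := by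
    have hle3 : #u.support ≤ 3 := hcard3 ▸ Finset.card_le_card husupp
    rcases Nat.lt_or_ge #u.support 2 with hlt | hge
    · have h0 : #u.support = 0 := by
        have := card_support_ne_one (f := u)
        omega
      have h1 : u = 1 := support_eq_empty_iff.mp (Finset.card_eq_zero.mp h0)
      rw [h1]
      exact Commute.one_left c
    rcases Nat.eq_or_lt_of_le hge with h2 | h3
    · exfalso
      obtain ⟨p, q, hpq, hupq⟩ := card_support_eq_two.mp h2.symm
      rw [hupq, sign_swap hpq] at hsu
      exact absurd hsu (by decide)
    · have h3' : #u.support = 3 := le_antisymm hle3 h3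
      have hequ : u.support = {a, b, d} :=
        Finset.eq_of_subset_of_card_le husupp (by omega)
      rcases threeCycle_dichotomy hab had hbd hequ with h | h
      · rw [h]
      · rw [h]
        exact (Commute.refl c).inv_left
  have hvc : Commute v c := by
    apply Equiv.Perm.Disjoint.commute
    rw [disjoint_iff_disjoint_support]
    apply Finset.disjoint_of_subset_left hvsupp
    rw [hsupp, hsc]
    exact disjoint_compl_left
  have hxu : x = u * v := by rw [hu]; group
  rw [hxu]
  exact hucomm.mul_left hvc

private theorem commute_cycle_of_commute_full {f c x : Perm α}
    (hcf : c ∈ f.cycleFactorsFinset) (hc3 : #c.support = 3)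
    (hcount3 : Multiset.count 3 f.cycleType ≤ 2)
    (hcount : ∀ s, s ≠ 3 → Multiset.count s f.cycleType ≤ 1)
    (hodd : ∀ i ∈ f.cycleType, Odd i)
    (hfull : f.support = Finset.univ)
    (hx : Perm.sign x = 1) (hcomm : Commute x f) :
    Commute x c := by
  have hhf : x * c * x⁻¹ ∈ f.cycleFactorsFinset := conj_mem_cycleFactorsFinset hcomm hcf
  by_cases heq : x * c * x⁻¹ = c
  · exact commute_of_conj heq
  exfalso
  set h := x * c * x⁻¹ with hh
  have hh3 : #h.support = 3 := by rw [hh, card_support_conj, hc3]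
  have hhc : h ≠ c := heq
  have hxh : x * h * x⁻¹ = c := by
    have hh'f : x * h * x⁻¹ ∈ f.cycleFactorsFinset := conj_mem_cycleFactorsFinset hcomm hhf
    have hh'3 : #(x * h * x⁻¹).support = 3 := by rw [card_support_conj, hh3]
    by_contra hne
    have hh'h : x * h * x⁻¹ ≠ h := by
      intro he
      apply hhc
      have : x * h * x⁻¹ = x * c * x⁻¹ := by rw [he, hh]
      exact mul_left_cancel (mul_right_cancel this)
    have h3 : (3 : ℕ) ≤ Multiset.count 3 f.cycleType := by
      have hcard : #({c, h, x * h * x⁻¹} : Finset (Perm α)) = 3 := by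
        rw [Finset.card_insert_of_notMem (by
            simp only [Finset.mem_insert, Finset.mem_singleton, not_or]
            exact ⟨fun he => hhc he.symm, fun he => hne he.symm⟩),
          Finset.card_insert_of_notMem (by
            simp only [Finset.mem_singleton]
            exact fun he => hh'h he.symm),
          Finset.card_singleton]
      have := le_count_cycleType (f := f) (s := 3) {c, h, x * h * x⁻¹} ?_ ?_
      · omega
      · intro p hp
        simp only [Finset.mem_insert, Finset.mem_singleton] at hp
        rcases hp with rfl | rfl | rfl
        · exact hcf
        · exact hhf
        · exact hh'f
      · intro p hp
        simp only [Finset.mem_insert, Finset.mem_singleton] at hp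
        rcases hp with rfl | rfl | rfl
        · exact hc3
        · exact hh3
        · exact hh'3
    omega
  have hdisjch : _root_.Disjoint c.support h.support := by
    have hpd := cycleFactorsFinset_pairwise_disjoint (f := f)
    exact (hpd hcf hhf hhc.symm).disjoint_support
  have hcommch : Commute c h := (disjoint_iff_disjoint_support.mpr hdisjch).commute
  have hsch : h.support = c.support.map x.toEmbedding := by rw [hh, support_conj]
  have hshc : c.support = h.support.map x.toEmbedding := by rw [← hxh, support_conj]
  have hK1 : ∀ p ∈ c.support, x p ∈ h.support := fun p hp => by
    rw [hsch]; exact Finset.mem_map_of_mem _ hp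
  have hK2 : ∀ p ∈ h.support, x p ∈ c.support := fun p hp => by
    rw [hshc]; exact Finset.mem_map_of_mem _ hp
  have hKinv : ∀ p, p ∈ c.support ∪ h.support ↔ x p ∈ c.support ∪ h.support := by
    intro p
    constructor
    · intro hp
      rcases Finset.mem_union.mp hp with hp | hp
      · exact Finset.mem_union_right _ (hK1 p hp)
      · exact Finset.mem_union_left _ (hK2 p hp)
    · intro hp
      rcases Finset.mem_union.mp hp with hp | hp
      · rw [hshc] at hp
        obtain ⟨q, hq, hq2⟩ := Finset.mem_map.mp hp
        have hqp : q = p := x.injective hq2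
        exact Finset.mem_union_right _ (hqp ▸ hq)
      · rw [hsch] at hp
        obtain ⟨q, hq, hq2⟩ := Finset.mem_map.mp hp
        have hqp : q = p := x.injective hq2
        exact Finset.mem_union_left _ (hqp ▸ hq)
  set w := ofSubtype (x.subtypePerm fun p => (hKinv p).symm) with hw
  have hw_on : ∀ p ∈ c.support ∪ h.support, w p = x p := fun p hp => by
    rw [hw, ofSubtype_apply_of_mem _ hp]; rfl
  have hwfix : ∀ p, p ∉ c.support ∪ h.support → w p = p := fun p hp =>
    ofSubtype_apply_of_not_mem _ hp
  have hw1 : ∀ p ∈ c.support, w p ∈ h.support := fun p hp => by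
    rw [hw_on p (Finset.mem_union_left _ hp)]; exact hK1 p hp
  have hw2 : ∀ p ∈ h.support, w p ∈ c.support := fun p hp => by
    rw [hw_on p (Finset.mem_union_right _ hp)]; exact hK2 p hp
  have hw3 : ∀ p, p ∉ c.support → p ∉ h.support → w p = p := fun p h1 h2 =>
    hwfix p (by simp [h1, h2])
  have hwsupp : w.support ⊆ c.support ∪ h.support := fun p hp => by
    by_contra hm; exact mem_support.mp hp (hwfix p hm)
  have hwc : w * c = h * w := by
    refine Equiv.ext fun p => ?_
    simp only [mul_apply]
    by_cases hp : p ∈ c.support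
    · have hcp : c p ∈ c.support := apply_mem_support.mpr hp
      rw [hw_on _ (Finset.mem_union_left _ hcp), hw_on _ (Finset.mem_union_left _ hp), hh]
      simp [mul_apply]
    · have hcp : c p = p := notMem_support.mp hp
      rw [hcp]
      by_cases hp2 : p ∈ h.support
      · have hwp : w p ∈ c.support := hw2 p hp2
        exact (notMem_support.mp (Finset.disjoint_left.mp hdisjch hwp)).symm
      · rw [hw3 p hp hp2, notMem_support.mp hp2]
  have hwh : w * h = c * w := by
    refine Equiv.ext fun p => ?_
    simp only [mul_apply]
    by_cases hp : p ∈ h.support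
    · have hhp : h p ∈ h.support := apply_mem_support.mpr hp
      rw [hw_on _ (Finset.mem_union_right _ hhp), hw_on _ (Finset.mem_union_right _ hp), ← hxh]
      simp [mul_apply]
    · have hhp : h p = p := notMem_support.mp hp
      rw [hhp]
      by_cases hp2 : p ∈ c.support
      · have hwp : w p ∈ h.support := hw1 p hp2
        exact (notMem_support.mp (Finset.disjoint_right.mp hdisjch hwp)).symm
      · rw [hw3 p hp2 hp, notMem_support.mp hp2]
  have hwwc : Commute (w * w) c := by
    show w * w * c = c * (w * w)
    rw [mul_assoc, hwc, ← mul_assoc, hwh, mul_assoc]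
  have hwwh : Commute (w * w) h := by
    show w * w * h = h * (w * w)
    rw [mul_assoc, hwh, ← mul_assoc, hwc, mul_assoc]
  have hcthree : c.IsThreeCycle := card_support_eq_three_iff.mp hc3
  have hhthree : h.IsThreeCycle := card_support_eq_three_iff.mp hh3
  have hsw : Perm.sign w = -1 :=
    sign_swap_threeCycles hcthree hhthree hdisjch hw1 hw2 hw3 hwwc hwwh
  -- remove c and h from f
  have hdf1 : Equiv.Perm.Disjoint (f * c⁻¹) c := disjoint_mul_inv_of_mem_cycleFactorsFinset hcf
  have hf1c : f * c⁻¹ * c = f := inv_mul_cancel_right f c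
  have hfactf : f.cycleFactorsFinset = (f * c⁻¹).cycleFactorsFinset ∪ {c} := by
    conv_lhs => rw [← hf1c]
    rw [hdf1.cycleFactorsFinset_mul_eq_union,
      hcthree.isCycle.cycleFactorsFinset_eq_singleton]
  have hhf1 : h ∈ (f * c⁻¹).cycleFactorsFinset := by
    have hmem := hhf
    rw [hfactf] at hmem
    rcases Finset.mem_union.mp hmem with h1 | h1
    · exact h1
    · exact absurd (Finset.mem_singleton.mp h1) hhc
  have hdf2 : Equiv.Perm.Disjoint (f * c⁻¹ * h⁻¹) h :=
    disjoint_mul_inv_of_mem_cycleFactorsFinset hhf1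
  have hf2h : f * c⁻¹ * h⁻¹ * h = f * c⁻¹ := inv_mul_cancel_right _ h
  have hfactf1 : (f * c⁻¹).cycleFactorsFinset = (f * c⁻¹ * h⁻¹).cycleFactorsFinset ∪ {h} := by
    conv_lhs => rw [← hf2h]
    rw [hdf2.cycleFactorsFinset_mul_eq_union,
      hhthree.isCycle.cycleFactorsFinset_eq_singleton]
  set f2 := f * c⁻¹ * h⁻¹ with hf2
  have hsupf : f.support = (f * c⁻¹).support ∪ c.support := by
    conv_lhs => rw [← hf1c]
    rw [hdf1.support_mul]
  have hsupf1 : (f * c⁻¹).support = f2.support ∪ h.support := by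
    conv_lhs => rw [← hf2h]
    rw [hdf2.support_mul]
  have hdisjf2c : _root_.Disjoint f2.support c.support := by
    apply Finset.disjoint_of_subset_left _ hdf1.disjoint_support
    rw [hsupf1]
    exact Finset.subset_union_left
  have hsupp2 : f2.support = (c.support ∪ h.support)ᶜ := by
    ext p
    simp only [Finset.mem_compl, Finset.mem_union, not_or]
    constructor
    · intro hp
      exact ⟨Finset.disjoint_left.mp hdisjf2c hp,
        Finset.disjoint_left.mp hdf2.disjoint_support hp⟩
    · rintro ⟨h1, h2⟩
      have hpf : p ∈ f.support := by rw [hfull]; exact Finset.mem_univ p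
      rw [hsupf, hsupf1] at hpf
      simp only [Finset.mem_union] at hpf
      tauto
  set r := w⁻¹ * x with hr
  have hrsupp : r.support ⊆ f2.support := by
    rw [hsupp2]
    intro p hp
    rw [Finset.mem_compl]
    intro hpK
    apply mem_support.mp hp
    rw [hr, mul_apply, ← hw_on p hpK, inv_apply_self]
  have hrcomm : Commute r f2 := by
    have hch : Commute x (c * h) := by
      apply commute_of_conj
      have e1 : x * (c * h) * x⁻¹ = x * c * x⁻¹ * (x * h * x⁻¹) := by group
      rw [e1, ← hh, hxh]
      exact hcommch.symm.eq
    have hf2eq : f2 = f * (c * h)⁻¹ := by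
      rw [hf2, mul_inv_rev c h, mul_assoc f c⁻¹ h⁻¹, hcommch.inv_inv.eq]
    have hxf2 : Commute x f2 := by
      rw [hf2eq]
      exact hcomm.mul_right hch.inv_right
    have hwf2 : Commute w f2 := by
      apply Equiv.Perm.Disjoint.commute
      rw [disjoint_iff_disjoint_support]
      apply Finset.disjoint_of_subset_left hwsupp
      rw [hsupp2]
      exact disjoint_compl_right
    exact (hwf2.inv_left).mul_left hxf2
  have hsubfact : f2.cycleFactorsFinset ⊆ f.cycleFactorsFinset := by
    rw [hfactf, hfactf1]
    intro g hg
    simp only [Finset.mem_union]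
    exact Or.inl (Or.inl hg)
  have hne_ch : ∀ g ∈ f2.cycleFactorsFinset, g ≠ c ∧ g ≠ h := by
    intro g hg
    have hsg : g.support ⊆ f2.support := mem_cycleFactorsFinset_support_le hg
    obtain ⟨p, hp⟩ : c.support.Nonempty := by
      rw [← Finset.card_pos, hc3]; norm_num
    obtain ⟨q, hq⟩ : h.support.Nonempty := by
      rw [← Finset.card_pos, hh3]; norm_num
    constructor
    · intro he
      subst he
      exact Finset.disjoint_left.mp hdisjf2c (hsg hp) hp
    · intro he
      subst he
      exact Finset.disjoint_left.mp hdf2.disjoint_support (hsg hq) hq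
  have hmemtype : ∀ g ∈ f2.cycleFactorsFinset, #g.support ∈ f.cycleType := by
    intro g hg
    rw [cycleType_def, Multiset.mem_map]
    exact ⟨g, hsubfact hg, rfl⟩
  have hodd2 : ∀ i ∈ f2.cycleType, Odd i := by
    intro i hi
    rw [cycleType_def, Multiset.mem_map] at hi
    obtain ⟨g, hg, rfl⟩ := hi
    exact hodd _ (hmemtype g hg)
  have hnd2 : f2.cycleType.Nodup := by
    rw [cycleType_def]
    apply Multiset.Nodup.map_on ?_ f2.cycleFactorsFinset.nodup
    intro g1 hg1 g2 hg2 hcardeq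
    by_contra hne
    simp only [Function.comp_apply] at hcardeq
    by_cases hs3 : #g1.support = 3
    · have h3le : (3 : ℕ) ≤ Multiset.count 3 f.cycleType := by
        have hg1' := (hne_ch g1 hg1)
        have hcard : #({c, h, g1} : Finset (Perm α)) = 3 := by
          rw [Finset.card_insert_of_notMem (by
              simp only [Finset.mem_insert, Finset.mem_singleton, not_or]
              exact ⟨fun he => hhc he.symm, fun he => hg1'.1 he.symm⟩),
            Finset.card_insert_of_notMem (by
              simp only [Finset.mem_singleton]
              exact fun he => hg1'.2 he.symm),
            Finset.card_singleton]
        have := le_count_cycleType (f := f) (s := 3) {c, h, g1} ?_ ?_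
        · omega
        · intro p hp
          simp only [Finset.mem_insert, Finset.mem_singleton] at hp
          rcases hp with rfl | rfl | rfl
          · exact hcf
          · exact hhf
          · exact hsubfact hg1
        · intro p hp
          simp only [Finset.mem_insert, Finset.mem_singleton] at hp
          rcases hp with rfl | rfl | rfl
          · exact hc3
          · exact hh3
          · exact hs3
      omega
    · have h2le : (2 : ℕ) ≤ Multiset.count #g1.support f.cycleType := by
        have hcard : #({g1, g2} : Finset (Perm α)) = 2 := by
          rw [Finset.card_insert_of_notMem (by simp [hne]), Finset.card_singleton]
        have := le_count_cycleType (f := f) (s := #g1.support) {g1, g2} ?_ ?_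
        · omega
        · intro p hp
          simp only [Finset.mem_insert, Finset.mem_singleton] at hp
          rcases hp with rfl | rfl
          · exact hsubfact hg1
          · exact hsubfact hg2
        · intro p hp
          simp only [Finset.mem_insert, Finset.mem_singleton] at hp
          rcases hp with rfl | rfl
          · rfl
          · exact hcardeq.symm
      have := hcount _ hs3
      omega
  have hsr : Perm.sign r = 1 :=
    sign_eq_one_aux #f2.support f2 r le_rfl hrcomm hnd2 hodd2 hrsupp
  have hxneg : Perm.sign x = -1 := by
    have hxwr : x = w * r := by rw [hr]; group
    rw [hxwr, map_mul, hsw, hsr, mul_one]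
  rw [hx] at hxneg
  exact absurd hxneg (by decide)

/-- Let `n ≥ 4` and let `ν` be a partition of `n − 3` into distinct odd parts all `≥ 3`.
Let `σ ∈ Aₙ` have cycle type `ν` and fix the three points `0, 1, 2` (so its cycle type
as a partition of `n` is `1³ν`), and let `τ = (0 1 2)·σ` (cycle type `3¹ν`). Then
`Z_{Aₙ}(σ) = Z_{Aₙ}(τ)`; in particular `σ` and `τ` are z-conjugate in `Aₙ`. -/
theorem stmt_19 (n : ℕ) (hn : 4 ≤ n) (ν : Nat.Partition (n - 3))
    (hdist : ν.parts.Nodup) (hν : ∀ i ∈ ν.parts, Odd i ∧ 3 ≤ i)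
    (σ : Equiv.Perm (Fin n)) (hσ : σ.cycleType = ν.parts)
    (h0 : (⟨0, by omega⟩ : Fin n) ∉ σ.support)
    (h1 : (⟨1, by omega⟩ : Fin n) ∉ σ.support)
    (h2 : (⟨2, by omega⟩ : Fin n) ∉ σ.support)
    (τ : Equiv.Perm (Fin n))
    (hτ : τ = Equiv.swap (⟨0, by omega⟩ : Fin n) ⟨1, by omega⟩ *
      Equiv.swap (⟨1, by omega⟩ : Fin n) ⟨2, by omega⟩ * σ) :
    altCentralizer σ = altCentralizer τ ∧
      ∃ g ∈ alternatingGroup (Fin n),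
        altCentralizer τ = (altCentralizer σ).map (MulAut.conj g).toMonoidHom := by

  obtain ⟨a, ha0⟩ : ∃ a : Fin n, a = ⟨0, by omega⟩ := ⟨_, rfl⟩
  obtain ⟨b, hb0⟩ : ∃ b : Fin n, b = ⟨1, by omega⟩ := ⟨_, rfl⟩
  obtain ⟨d, hd0⟩ : ∃ d : Fin n, d = ⟨2, by omega⟩ := ⟨_, rfl⟩
  rw [← ha0] at h0 hτ
  rw [← hb0] at h1 hτ
  rw [← hd0] at h2 hτ
  have hab : a ≠ b := by rw [ha0, hb0]; exact Fin.ne_of_val_ne (by norm_num)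
  have had : a ≠ d := by rw [ha0, hd0]; exact Fin.ne_of_val_ne (by norm_num)
  have hbd : b ≠ d := by rw [hb0, hd0]; exact Fin.ne_of_val_ne (by norm_num)
  set c := Equiv.swap a b * Equiv.swap b d with hc
  have hτ' : τ = c * σ := by rw [hτ]
  have hsc : c.support = {a, b, d} := support_swap_mul_swap (by simp [hab, had, hbd])
  have hcard3 : #({a, b, d} : Finset (Fin n)) = 3 := by
    rw [Finset.card_insert_of_notMem (by simp [hab, had]),
      Finset.card_insert_of_notMem (by simp [hbd]), Finset.card_singleton]
  have hsupσ : σ.support = ({a, b, d} : Finset (Fin n))ᶜ := by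
    apply Finset.eq_of_subset_of_card_le
    · intro p hp
      rw [Finset.mem_compl]
      intro hm
      simp only [Finset.mem_insert, Finset.mem_singleton] at hm
      rcases hm with rfl | rfl | rfl
      · exact h0 hp
      · exact h1 hp
      · exact h2 hp
    · have hcs : #σ.support = n - 3 := by rw [← sum_cycleType, hσ, ν.parts_sum]
      have hcc : #(({a, b, d} : Finset (Fin n))ᶜ) = n - 3 := by
        rw [Finset.card_compl, hcard3, Fintype.card_fin]
      rw [hcs, hcc]
  have hodds : ∀ i ∈ σ.cycleType, Odd i := by rw [hσ]; exact fun i hi => (hν i hi).1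
  have hnds : σ.cycleType.Nodup := by rw [hσ]; exact hdist
  have hdisj : Equiv.Perm.Disjoint c σ := by
    rw [disjoint_iff_disjoint_support, hsc, hsupσ]
    exact disjoint_compl_right
  have hcthree : c.IsThreeCycle := card_support_eq_three_iff.mp (by rw [hsc, hcard3])
  have hctype : τ.cycleType = 3 ::ₘ ν.parts := by
    rw [hτ', hdisj.cycleType_mul, hcthree.cycleType, hσ, Multiset.singleton_add]
  have key : ∀ x : Equiv.Perm (Fin n), x ∈ altCentralizer σ ↔ x ∈ altCentralizer τ := by
    intro x
    simp only [altCentralizer, Subgroup.mem_inf, Subgroup.mem_centralizer_singleton_iff,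
      Equiv.Perm.mem_alternatingGroup]
    constructor
    · rintro ⟨hcen, hsgn⟩
      have hcomm : Commute x σ := (commute_iff_eq _ _).mpr hcen
      have hcc : Commute x c :=
        commute_threeCycle_of_commute_base hab had hbd hsupσ hnds hodds hsgn hcomm
      refine ⟨?_, hsgn⟩
      have hct : Commute x τ := by rw [hτ']; exact hcc.mul_right hcomm
      exact hct.eq
    · rintro ⟨hcen, hsgn⟩
      have hcomm : Commute x τ := (commute_iff_eq _ _).mpr hcen
      have hcf : c ∈ τ.cycleFactorsFinset := by
        rw [mem_cycleFactorsFinset_iff]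
        refine ⟨hcthree.isCycle, ?_⟩
        intro p hp
        have hps : σ p = p := by
          apply notMem_support.mp
          rw [hsupσ]
          simp only [Finset.mem_compl, not_not]
          rw [← hsc]
          exact hp
        simp only [hτ', hc, mul_apply, hps]
      have hcount3 : Multiset.count 3 τ.cycleType ≤ 2 := by
        rw [hctype, Multiset.count_cons_self]
        have := Multiset.nodup_iff_count_le_one.mp hdist 3
        omega
      have hcount : ∀ s, s ≠ 3 → Multiset.count s τ.cycleType ≤ 1 := by
        intro s hs
        rw [hctype, Multiset.count_cons_of_ne hs]
        exact Multiset.nodup_iff_count_le_one.mp hdist s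
      have hoddτ : ∀ i ∈ τ.cycleType, Odd i := by
        rw [hctype]
        intro i hi
        rcases Multiset.mem_cons.mp hi with rfl | hi
        · exact ⟨1, by norm_num⟩
        · exact (hν i hi).1
      have hfull : τ.support = Finset.univ := by
        rw [hτ', hdisj.support_mul, hsc, hsupσ]
        exact Finset.union_compl _
      have hc3' : #c.support = 3 := by rw [hsc]; exact hcard3
      have hcc : Commute x c :=
        commute_cycle_of_commute_full hcf hc3' hcount3 hcount hoddτ hfull hsgn hcomm
      refine ⟨?_, hsgn⟩
      have hcs : Commute x σ := by
        have hσeq : σ = c⁻¹ * τ := by rw [hτ']; group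
        rw [hσeq]
        exact hcc.inv_right.mul_right hcomm
      exact hcs.eq
  have hmain : altCentralizer σ = altCentralizer τ := SetLike.ext key
  refine ⟨hmain, 1, Subgroup.one_mem _, ?_⟩
  have hid : (MulAut.conj (1 : Equiv.Perm (Fin n))).toMonoidHom =
      MonoidHom.id (Equiv.Perm (Fin n)) := by
    ext p
    simp
  rw [hid, Subgroup.map_id]
  exact hmain.symm
end
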